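/- arXiv:2007.05628 — 5 statements merged into one kernel-verified Lean document; each statement's English description precedes it below -/
import Mathlib

section
/- Let Q be a finite group, G a Q-group, and A an abelian group with trivial G- and Q-actions such that |Q| is invertible in A. Then the natural map i_* : H_*^Q(G, A) → H_*(G, A)^Q, induced by the inclusion of the subcomplex of Q-invariant chains into the full bar complex, is an isomorphism in every degree. -/
open Finsupp

namespace InvariantHomology

noncomputable section

/-- Inhomogeneous `n`-chains of `G` with coefficients in the abelian group `A`
(with trivial action): the free `A`-span of `n`-tuples of elements of `G`. -/
abbrev Ch (G A : Type*) [AddCommGroup A] (n : ℕ) : Type _ := (Fin n → G) →₀ A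

/-- The `i`-th inner face of an inhomogeneous `(n+1)`-tuple: multiply the `i`-th and
`(i+1)`-st entries. -/
def fm {G : Type*} [Group G] {n : ℕ} (g : Fin (n + 1) → G) (i : Fin n) : Fin n → G :=
  fun j =>
    if (j : ℕ) < (i : ℕ) then g j.castSucc
    else if j = i then g i.castSucc * g i.succ
    else g j.succ

variable (G A : Type*) [Group G] [AddCommGroup A]

/-- The differential of the bar complex (with trivial coefficients):
`d[g₁|⋯|g_{n+1}] = [g₂|⋯|g_{n+1}] + ∑ᵢ (-1)ⁱ [g₁|⋯|gᵢgᵢ₊₁|⋯|g_{n+1}] + (-1)^{n+1} [g₁|⋯|gₙ]`. -/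
def bd (n : ℕ) : Ch G A (n + 1) →+ Ch G A n :=
  Finsupp.liftAddHom fun g =>
    (Finsupp.singleAddHom (Fin.tail g) : A →+ Ch G A n)
      + ∑ i : Fin n, ((-1 : ℤ) ^ ((i : ℕ) + 1)) • (Finsupp.singleAddHom (fm g i) : A →+ Ch G A n)
      + ((-1 : ℤ) ^ (n + 1)) • (Finsupp.singleAddHom (Fin.init g) : A →+ Ch G A n)

/-- The differential, re-indexed as a map `Cₙ → C_{n-1}` (zero for `n = 0`). -/
def dd : ∀ n : ℕ, Ch G A n →+ Ch G A (n - 1)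
  | 0 => 0
  | n + 1 => bd G A n

/-- Cycles. -/
def cyc (n : ℕ) : AddSubgroup (Ch G A n) := (dd G A n).ker

/-- Boundaries. -/
def bdry (n : ℕ) : AddSubgroup (Ch G A n) := (bd G A n).range

/-- The group homology `Hₙ(G, A)` with trivial coefficients, computed from the bar complex. -/
def Hn (n : ℕ) : Type _ := cyc G A n ⧸ ((bdry G A n).addSubgroupOf (cyc G A n))

instance (n : ℕ) : AddCommGroup (Hn G A n) :=
  QuotientAddGroup.Quotient.addCommGroup _

variable (Q : Type*) [Group Q] [MulDistribMulAction Q G]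

/-- The action of `q : Q` on chains, `q • [g₁|⋯|gₙ] = [q g₁|⋯|q gₙ]`. -/
def qch (q : Q) (n : ℕ) : Ch G A n →+ Ch G A n :=
  Finsupp.mapDomain.addMonoidHom fun g : Fin n → G => q • g

/-- The subgroup of `Q`-invariant chains. -/
def invCh (n : ℕ) : AddSubgroup (Ch G A n) where
  carrier := { x | ∀ q : Q, qch G A Q q n x = x }
  add_mem' := by intro a b ha hb q; rw [map_add, ha q, hb q]
  zero_mem' := fun q => map_zero _
  neg_mem' := by intro a ha q; rw [map_neg, ha q]

/-- Invariant cycles. -/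
def cycQ (n : ℕ) : AddSubgroup (Ch G A n) := cyc G A n ⊓ invCh G A Q n

/-- Boundaries of invariant chains. -/
def bdryQ (n : ℕ) : AddSubgroup (Ch G A n) := (invCh G A Q (n + 1)).map (bd G A n)

/-- The homology `Hₙ^Q(G, A)` of the subcomplex of `Q`-invariant chains. -/
def HQ (n : ℕ) : Type _ := cycQ G A Q n ⧸ ((bdryQ G A Q n).addSubgroupOf (cycQ G A Q n))

instance (n : ℕ) : AddCommGroup (HQ G A Q n) :=
  QuotientAddGroup.Quotient.addCommGroup _

/-- The natural map `H_*^Q(G, A) → H_*(G, A)` induced by the inclusion of the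
invariant subcomplex in the bar complex. -/
def iStar (n : ℕ) : HQ G A Q n →+ Hn G A n :=
  QuotientAddGroup.map _ _
    (AddSubgroup.inclusion (inf_le_left : cycQ G A Q n ≤ cyc G A n))
    (by
      intro x hx
      rw [AddSubgroup.mem_addSubgroupOf] at hx
      obtain ⟨y, -, hy⟩ := hx
      exact ⟨y, hy⟩)

theorem tail_qsmul (q : Q) {n : ℕ} (g : Fin (n + 1) → G) :
    Fin.tail (q • g) = q • Fin.tail g := rfl

theorem init_qsmul (q : Q) {n : ℕ} (g : Fin (n + 1) → G) :
    Fin.init (q • g) = q • Fin.init g := rfl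

theorem fm_qsmul (q : Q) {n : ℕ} (g : Fin (n + 1) → G) (i : Fin n) :
    fm (q • g) i = q • fm g i := by
  funext j
  simp only [fm, Pi.smul_apply]
  split_ifs <;> simp [smul_mul']

theorem qch_single (q : Q) {n : ℕ} (g : Fin n → G) (a : A) :
    qch G A Q q n (Finsupp.single g a) = Finsupp.single (q • g) a :=
  Finsupp.mapDomain_single

theorem bd_single {n : ℕ} (g : Fin (n + 1) → G) (a : A) :
    bd G A n (Finsupp.single g a) =
      Finsupp.single (Fin.tail g) a
        + ∑ i : Fin n, ((-1 : ℤ) ^ ((i : ℕ) + 1)) • Finsupp.single (fm g i) a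
        + ((-1 : ℤ) ^ (n + 1)) • Finsupp.single (Fin.init g) a := by
  simp [bd, Finsupp.liftAddHom_apply_single]

theorem bd_qch (q : Q) (n : ℕ) :
    (bd G A n).comp (qch G A Q q (n + 1)) = (qch G A Q q n).comp (bd G A n) := by
  refine Finsupp.addHom_ext fun g a => ?_
  simp only [AddMonoidHom.comp_apply, qch_single, bd_single, map_add, map_sum, map_zsmul,
    tail_qsmul, init_qsmul, fm_qsmul]

theorem dd_qch (q : Q) (n : ℕ) :
    (dd G A n).comp (qch G A Q q n) = (qch G A Q q (n - 1)).comp (dd G A n) := by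
  cases n with
  | zero => ext g a; simp [dd]
  | succ n => exact bd_qch G A Q q n

/-- The action of `q : Q` on cycles. -/
def qcyc (q : Q) (n : ℕ) : cyc G A n →+ cyc G A n :=
  ((qch G A Q q n).comp (cyc G A n).subtype).codRestrict _ (by
    intro x
    have hx : dd G A n (x : Ch G A n) = 0 := x.2
    have := congrArg (fun f : Ch G A n →+ Ch G A (n - 1) => f (x : Ch G A n)) (dd_qch G A Q q n)
    simp only [AddMonoidHom.comp_apply] at this
    simp only [AddMonoidHom.comp_apply, AddSubgroup.coe_subtype]
    show qch G A Q q n (x : Ch G A n) ∈ cyc G A n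
    have hmem : dd G A n (qch G A Q q n (x : Ch G A n)) = 0 := by
      rw [this, hx, map_zero]
    exact hmem)

/-- The induced action of `q : Q` on the homology `Hₙ(G, A)`. -/
def qHn (q : Q) (n : ℕ) : Hn G A n →+ Hn G A n :=
  QuotientAddGroup.map _ _ (qcyc G A Q q n) (by
    intro x hx
    rw [AddSubgroup.mem_addSubgroupOf] at hx
    obtain ⟨y, hy⟩ := hx
    rw [AddSubgroup.mem_comap, AddSubgroup.mem_addSubgroupOf]
    refine ⟨qch G A Q q (n + 1) y, ?_⟩
    have := congrArg (fun f : Ch G A (n+1) →+ Ch G A n => f y) (bd_qch G A Q q n)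
    simp only [AddMonoidHom.comp_apply] at this
    show bd G A n (qch G A Q q (n+1) y) = _
    rw [this, hy]
    rfl)

/-- The subgroup of `Q`-invariant homology classes `Hₙ(G, A)^Q`. -/
def HnInv (n : ℕ) : AddSubgroup (Hn G A n) where
  carrier := { x | ∀ q : Q, qHn G A Q q n x = x }
  add_mem' := by intro a b ha hb q; rw [map_add, ha q, hb q]
  zero_mem' := fun q => map_zero _
  neg_mem' := by intro a ha q; rw [map_neg, ha q]

theorem qch_mul (q q' : Q) (n : ℕ) :
    qch G A Q (q * q') n = (qch G A Q q n).comp (qch G A Q q' n) := by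
  refine Finsupp.addHom_ext fun g a => ?_
  simp [qch_single, mul_smul]

theorem qHn_mul (q q' : Q) (n : ℕ) (x : Hn G A n) :
    qHn G A Q q n (qHn G A Q q' n x) = qHn G A Q (q * q') n x := by
  induction x using QuotientAddGroup.induction_on with
  | H z =>
    show QuotientAddGroup.mk (qcyc G A Q q n (qcyc G A Q q' n z))
      = QuotientAddGroup.mk (qcyc G A Q (q * q') n z)
    congr 1
    refine Subtype.ext ?_
    show qch G A Q q n (qch G A Q q' n (z : Ch G A n)) = qch G A Q (q * q') n (z : Ch G A n)
    rw [qch_mul]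
    rfl

/-- The subgroup of `Hₙ(G, A)` generated by the elements `y - q • y`. -/
def coinvRel (n : ℕ) : AddSubgroup (Hn G A n) :=
  AddSubgroup.closure {x | ∃ (q : Q) (y : Hn G A n), x = y - qHn G A Q q n y}

/-- The coinvariants `Hₙ(G, A)_Q` of the `Q`-action on homology. -/
def HnCoinv (n : ℕ) : Type _ := Hn G A n ⧸ coinvRel G A Q n

instance (n : ℕ) : AddCommGroup (HnCoinv G A Q n) :=
  QuotientAddGroup.Quotient.addCommGroup _

/-- The norm map `Hₙ(G, A)_Q → Hₙ(G, A)`, sending the class of `x` to `∑_{q ∈ Q} q • x`. -/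
def normHn [Fintype Q] (n : ℕ) : HnCoinv G A Q n →+ Hn G A n :=
  QuotientAddGroup.lift _ (∑ q : Q, qHn G A Q q n) (by
    rw [coinvRel, AddSubgroup.closure_le]
    rintro x ⟨q', y, rfl⟩
    simp only [SetLike.mem_coe, AddMonoidHom.mem_ker, map_sub, AddMonoidHom.finset_sum_apply]
    rw [sub_eq_zero]
    refine Fintype.sum_equiv (Equiv.mulRight q'⁻¹) _ _ fun q => ?_
    show qHn G A Q q n y = qHn G A Q (q * q'⁻¹) n (qHn G A Q q' n y)
    rw [qHn_mul, inv_mul_cancel_right])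

section Norm1

variable (G : Type*) [Group G] (Q : Type*) [Group Q] [MulDistribMulAction Q G] [Fintype Q]

/-- The `Q`-invariant `1`-chain `∑_{q ∈ Q} [q • g]` associated to `g : G`. -/
def ncyc (g : G) : Ch G ℤ 1 :=
  ∑ q : Q, Finsupp.single (fun _ : Fin 1 => q • g) (1 : ℤ)

theorem ncyc_mem (g : G) : ncyc G Q g ∈ cycQ G ℤ Q 1 := by
  constructor
  · show dd G ℤ 1 (ncyc G Q g) = 0
    show bd G ℤ 0 (ncyc G Q g) = 0
    rw [ncyc, map_sum]
    refine Finset.sum_eq_zero fun q _ => ?_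
    rw [bd_single]
    have h : Fin.tail (fun _ : Fin 1 => q • g) = Fin.init (fun _ : Fin 1 => q • g) :=
      Subsingleton.elim _ _
    simp [h]
  · intro q'
    rw [ncyc, map_sum]
    simp only [qch_single]
    refine Fintype.sum_equiv (Equiv.mulLeft q') _ _ fun q => ?_
    congr 1
    funext _
    show q' • (q • g) = (q' * q) • g
    rw [mul_smul]

/-- The norm map `N : G → H₁^Q(G, ℤ)`, sending `g` to the class of `∑_{q ∈ Q} [q • g]`. -/
def NQ (g : G) : HQ G ℤ Q 1 :=
  QuotientAddGroup.mk ⟨ncyc G Q g, ncyc_mem G Q g⟩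

end Norm1

end

end InvariantHomology

namespace InvariantHomology

noncomputable section Aux

section NrmSec

variable (G A Q : Type*) [Group G] [AddCommGroup A] [Group Q] [MulDistribMulAction Q G]
  [Fintype Q]

/-- The norm operator on chains, `N = ∑_{q ∈ Q} q•(-)`. -/
def Nrm (n : ℕ) : Ch G A n →+ Ch G A n := ∑ q : Q, qch G A Q q n

theorem Nrm_apply (n : ℕ) (x : Ch G A n) :
    Nrm G A Q n x = ∑ q : Q, qch G A Q q n x := by
  simp [Nrm]

theorem qch_Nrm (q' : Q) (n : ℕ) (x : Ch G A n) :
    qch G A Q q' n (Nrm G A Q n x) = Nrm G A Q n x := by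
  rw [Nrm_apply, map_sum]
  refine Fintype.sum_equiv (Equiv.mulLeft q') _ _ fun q => ?_
  have := congrArg (fun f : Ch G A n →+ Ch G A n => f x) (qch_mul G A Q q' q n)
  simpa using this.symm

theorem Nrm_inv {n : ℕ} {x : Ch G A n} (hx : x ∈ invCh G A Q n) :
    Nrm G A Q n x = Fintype.card Q • x := by
  rw [Nrm_apply, Finset.sum_congr rfl fun q _ => hx q, Finset.sum_const, Finset.card_univ]

theorem bd_Nrm (n : ℕ) (x : Ch G A (n + 1)) :
    bd G A n (Nrm G A Q (n + 1) x) = Nrm G A Q n (bd G A n x) := by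
  rw [Nrm_apply, map_sum, Nrm_apply]
  refine Finset.sum_congr rfl fun q _ => ?_
  have := congrArg (fun f : Ch G A (n + 1) →+ Ch G A n => f x) (bd_qch G A Q q n)
  simpa using this

end NrmSec

section MuSec

variable {A : Type*} [AddCommGroup A] (Q : Type*) [Fintype Q]

/-- The additive equivalence `a ↦ |Q| • a`. -/
def kEq (hA : Function.Bijective fun a : A => (Fintype.card Q : ℤ) • a) : A ≃+ A :=
  AddEquiv.mk' (Equiv.ofBijective _ hA) fun a b => smul_add (Fintype.card Q : ℤ) a b

/-- The inverse of multiplication by `|Q|` on `A`. -/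
def muA (hA : Function.Bijective fun a : A => (Fintype.card Q : ℤ) • a) : A →+ A :=
  (kEq Q hA).symm.toAddMonoidHom

theorem muA_cancel (hA : Function.Bijective fun a : A => (Fintype.card Q : ℤ) • a) (a : A) :
    muA Q hA ((Fintype.card Q : ℤ) • a) = a :=
  AddEquiv.symm_apply_apply (kEq Q hA) a

theorem muA_nsmul (hA : Function.Bijective fun a : A => (Fintype.card Q : ℤ) • a) (a : A) :
    muA Q hA (Fintype.card Q • a) = a := by
  rw [← natCast_zsmul]; exact muA_cancel Q hA a

variable (G : Type*)

/-- The inverse of multiplication by `|Q|` on chains. -/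
def muCh (hA : Function.Bijective fun a : A => (Fintype.card Q : ℤ) • a) (n : ℕ) :
    Ch G A n →+ Ch G A n :=
  Finsupp.mapRange.addMonoidHom (muA Q hA)

theorem muCh_apply (hA : Function.Bijective fun a : A => (Fintype.card Q : ℤ) • a) (n : ℕ)
    (x : Ch G A n) (g : Fin n → G) : muCh Q G hA n x g = muA Q hA (x g) := rfl

theorem muCh_single (hA : Function.Bijective fun a : A => (Fintype.card Q : ℤ) • a) (n : ℕ)
    (g : Fin n → G) (a : A) :
    muCh Q G hA n (Finsupp.single g a) = Finsupp.single g (muA Q hA a) := by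
  simp [muCh, Finsupp.mapRange.addMonoidHom]

theorem muCh_nsmul (hA : Function.Bijective fun a : A => (Fintype.card Q : ℤ) • a) (n : ℕ)
    (x : Ch G A n) : muCh Q G hA n (Fintype.card Q • x) = x := by
  ext g
  rw [muCh_apply]
  have : (Fintype.card Q • x) g = Fintype.card Q • x g :=
    map_nsmul (Finsupp.applyAddHom g : Ch G A n →+ A) (Fintype.card Q) x
  rw [this, muA_nsmul]

variable [Group G]

theorem bd_muCh (hA : Function.Bijective fun a : A => (Fintype.card Q : ℤ) • a) (n : ℕ)
    (x : Ch G A (n + 1)) :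
    bd G A n (muCh Q G hA (n + 1) x) = muCh Q G hA n (bd G A n x) := by
  have h : (bd G A n).comp (muCh Q G hA (n + 1)) = (muCh Q G hA n).comp (bd G A n) := by
    refine Finsupp.addHom_ext fun g a => ?_
    simp only [AddMonoidHom.comp_apply, muCh_single, bd_single, map_add, map_sum, map_zsmul]
  exact DFunLike.congr_fun h x

variable {Q' : Type*} [Group Q'] [MulDistribMulAction Q' G]

theorem qch_muCh (hA : Function.Bijective fun a : A => (Fintype.card Q : ℤ) • a) (q : Q')
    (n : ℕ) (x : Ch G A n) :
    qch G A Q' q n (muCh Q G hA n x) = muCh Q G hA n (qch G A Q' q n x) := by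
  have h : (qch G A Q' q n).comp (muCh Q G hA n) = (muCh Q G hA n).comp (qch G A Q' q n) := by
    refine Finsupp.addHom_ext fun g a => ?_
    simp only [AddMonoidHom.comp_apply, muCh_single, qch_single]
  exact DFunLike.congr_fun h x

end MuSec

end Aux

end InvariantHomology

open InvariantHomology in
/-- If `Q` is finite with `|Q|` invertible in `A`, the natural map
`i_* : H_*^Q(G, A) → H_*(G, A)` induced by the inclusion of the invariant subcomplex is a
bijection onto the fixed points `H_*(G, A)^Q`, in every degree. -/
theorem invariant_homology_bijOn_fixedPoints
    (G A Q : Type*) [Group G] [AddCommGroup A] [Group Q] [MulDistribMulAction Q G] [Fintype Q]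
    (hA : Function.Bijective fun a : A => (Fintype.card Q : ℤ) • a) (n : ℕ) :
    Set.BijOn (iStar G A Q n) Set.univ ↑(HnInv G A Q n) := by
  classical
  have iStar_mk : ∀ (z : cycQ G A Q n),
      iStar G A Q n (QuotientAddGroup.mk z)
        = QuotientAddGroup.mk (AddSubgroup.inclusion inf_le_left z) := fun z => rfl
  have qHn_mk : ∀ (q : Q) (w : cyc G A n),
      qHn G A Q q n (QuotientAddGroup.mk w) = QuotientAddGroup.mk (qcyc G A Q q n w) :=
    fun q w => rfl
  have qcyc_coe : ∀ (q : Q) (w : cyc G A n),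
      ((qcyc G A Q q n w : cyc G A n) : Ch G A n) = qch G A Q q n (w : Ch G A n) :=
    fun q w => rfl
  have e_inv : ∀ (m : ℕ) (x : Ch G A m),
      muCh Q G hA m (Nrm G A Q m x) ∈ invCh G A Q m := by
    intro m x q
    rw [qch_muCh, qch_Nrm]
  refine ⟨?_, ?_, ?_⟩
  · -- MapsTo
    intro x _
    induction x using QuotientAddGroup.induction_on with
    | H z =>
      intro q
      rw [iStar_mk, qHn_mk]
      refine congrArg _ (Subtype.ext ?_)
      rw [qcyc_coe]
      exact (AddSubgroup.mem_inf.mp z.2).2 q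
  · -- InjOn
    have hinj : Function.Injective (iStar G A Q n) := by
      rw [injective_iff_map_eq_zero]
      intro x hx
      induction x using QuotientAddGroup.induction_on with
      | H z =>
        erw [iStar_mk, QuotientAddGroup.eq_zero_iff, AddSubgroup.mem_addSubgroupOf] at hx
        obtain ⟨y, hy⟩ := hx
        erw [QuotientAddGroup.eq_zero_iff, AddSubgroup.mem_addSubgroupOf]
        refine AddSubgroup.mem_map.mpr
          ⟨muCh Q G hA (n + 1) (Nrm G A Q (n + 1) y), e_inv (n + 1) y, ?_⟩
        rw [bd_muCh, bd_Nrm]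
        have hy' : bd G A n y = (z : Ch G A n) := hy
        rw [hy', Nrm_inv G A Q (AddSubgroup.mem_inf.mp z.2).2, muCh_nsmul]
    exact hinj.injOn
  · -- SurjOn
    intro h hh
    induction h using QuotientAddGroup.induction_on with
    | H z =>
      have hz : dd G A n (z : Ch G A n) = 0 := z.2
      have hb : ∀ q : Q, qch G A Q q n (z : Ch G A n) - (z : Ch G A n) ∈ bdry G A n := by
        intro q
        have h1 := hh q
        erw [qHn_mk, QuotientAddGroup.eq, AddSubgroup.mem_addSubgroupOf] at h1
        have h2 : (-(qch G A Q q n (z : Ch G A n)) + (z : Ch G A n)) ∈ bdry G A n := h1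
        have h3 : qch G A Q q n (z : Ch G A n) - (z : Ch G A n)
            = -(-(qch G A Q q n (z : Ch G A n)) + (z : Ch G A n)) := by abel
        rw [h3]
        exact (bdry G A n).neg_mem h2
      set w : Ch G A n := muCh Q G hA n (Nrm G A Q n (z : Ch G A n)) with hw
      have hwcyc : w ∈ cyc G A n := by
        show dd G A n w = 0
        cases n with
        | zero => rfl
        | succ m =>
          show bd G A m w = 0
          rw [hw, bd_muCh, bd_Nrm]
          have hz' : bd G A m (z : Ch G A (m + 1)) = 0 := hz
          rw [hz', map_zero, map_zero]
      have hmem : w ∈ cycQ G A Q n :=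
        AddSubgroup.mem_inf.mpr ⟨hwcyc, e_inv n (z : Ch G A n)⟩
      refine ⟨QuotientAddGroup.mk ⟨w, hmem⟩, trivial, ?_⟩
      erw [iStar_mk, QuotientAddGroup.eq, AddSubgroup.mem_addSubgroupOf]
      have hsum : ∑ q : Q, (qch G A Q q n (z : Ch G A n) - (z : Ch G A n))
          = Nrm G A Q n (z : Ch G A n) - Fintype.card Q • (z : Ch G A n) := by
        rw [Finset.sum_sub_distrib, Finset.sum_const, Finset.card_univ, ← Nrm_apply]
      have hmem1 : Nrm G A Q n (z : Ch G A n) - Fintype.card Q • (z : Ch G A n)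
          ∈ bdry G A n := hsum ▸ AddSubgroup.sum_mem _ (fun q _ => hb q)
      obtain ⟨y, hy⟩ := hmem1
      have hkey : (-w + (z : Ch G A n))
          = -(muCh Q G hA n (Nrm G A Q n (z : Ch G A n) - Fintype.card Q • (z : Ch G A n))) := by
        rw [map_sub, muCh_nsmul, ← hw, neg_sub]
        abel
      show (-w + (z : Ch G A n)) ∈ bdry G A n
      rw [hkey]
      exact (bdry G A n).neg_mem ⟨muCh Q G hA (n + 1) y, by rw [bd_muCh, hy]⟩
end

section
/- Let Q be a finite group, G a Q-group, and A an abelian group with trivial G- and Q-actions. If |Q| is invertible in A, then for every q ≥ 0 there is an isomorphism H_q^Q(G, A) ≅ H_q(G ⋊_φ Q, A), where G ⋊_φ Q is the semidirect product determined by the action φ of Q on G and A is given the trivial G ⋊_φ Q-action. -/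
open Finsupp

namespace IHAux

open InvariantHomology Finsupp

noncomputable section

variable {X Y Z A : Type*} [AddCommGroup A]

/-- Coordinatewise map on homogeneous chains. -/
def cw (ψ : X → Y) {m : ℕ} : Ch X A m →+ Ch Y A m :=
  Finsupp.mapDomain.addMonoidHom fun x => ψ ∘ x

lemma cw_single (ψ : X → Y) {m : ℕ} (x : Fin m → X) (a : A) :
    cw ψ (single x a) = single (ψ ∘ x) a :=
  Finsupp.mapDomain_single

/-- Prepend a constant. -/
def cns (c : X) {m : ℕ} : Ch X A m →+ Ch X A (m + 1) :=
  Finsupp.mapDomain.addMonoidHom (fun x : Fin m → X => (Fin.cons c x : Fin (m+1) → X))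

lemma cns_single (c : X) {m : ℕ} (x : Fin m → X) (a : A) :
    cns c (single x a) = single (Fin.cons c x) a :=
  Finsupp.mapDomain_single

/-- The homogeneous (deletion) differential, defined recursively. -/
def pa (X A : Type*) [AddCommGroup A] : ∀ m : ℕ, Ch X A (m + 1) →+ Ch X A m
  | 0 => Finsupp.mapDomain.addMonoidHom Fin.tail
  | m + 1 => Finsupp.liftAddHom fun x =>
      (Finsupp.singleAddHom (Fin.tail x) : A →+ Ch X A (m + 1))
        - (cns (x 0)).comp ((pa X A m).comp (Finsupp.singleAddHom (Fin.tail x)))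

lemma pa_zero_single (x : Fin 1 → X) (a : A) :
    pa X A 0 (single x a) = single (Fin.tail x) a := by
  simp [pa]

lemma pa_succ_single {m : ℕ} (x : Fin (m + 2) → X) (a : A) :
    pa X A (m + 1) (single x a) =
      single (Fin.tail x) a - cns (x 0) (pa X A m (single (Fin.tail x) a)) := by
  simp [pa, Finsupp.liftAddHom_apply_single]

lemma pa_cns (c : X) {m : ℕ} :
    (pa X A (m + 1)).comp (cns c) = AddMonoidHom.id _ - (cns c).comp (pa X A m) := by
  refine Finsupp.addHom_ext fun y a => ?_
  simp only [AddMonoidHom.comp_apply, cns_single, pa_succ_single, Fin.tail_cons, Fin.cons_zero,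
    AddMonoidHom.sub_apply, AddMonoidHom.id_apply]

lemma pa_cns_apply (c : X) {m : ℕ} (z : Ch X A (m + 1)) :
    pa X A (m + 1) (cns c z) = z - cns c (pa X A m z) := by
  have := congrArg (fun f : Ch X A (m+1) →+ Ch X A (m+1) => f z) (pa_cns (A := A) c (m := m))
  simpa using this

lemma pa_zero_cns_hom (c : X) :
    (pa X A 0).comp (cns c) = AddMonoidHom.id _ := by
  refine Finsupp.addHom_ext fun y a => ?_
  simp only [AddMonoidHom.comp_apply, cns_single, pa_zero_single, Fin.tail_cons,
    AddMonoidHom.id_apply]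

lemma pa_zero_cns (c : X) (z : Ch X A 0) : pa X A 0 (cns c z) = z := by
  have := congrArg (fun f : Ch X A 0 →+ Ch X A 0 => f z) (pa_zero_cns_hom (A := A) c)
  simpa using this

lemma pa_pa {m : ℕ} : (pa X A m).comp (pa X A (m + 1)) = 0 := by
  induction m with
  | zero =>
    refine Finsupp.addHom_ext fun x a => ?_
    rw [AddMonoidHom.comp_apply, pa_succ_single, map_sub, pa_zero_cns]
    simp
  | succ m ih =>
    refine Finsupp.addHom_ext fun x a => ?_
    rw [AddMonoidHom.comp_apply, pa_succ_single, map_sub, pa_cns_apply]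
    have h0 : pa X A m (pa X A (m + 1) (single (Fin.tail x) a)) = 0 := by
      have := congrArg (fun f : Ch X A (m+2) →+ Ch X A m => f (single (Fin.tail x) a)) ih
      simpa using this
    rw [h0, map_zero, sub_zero, sub_self]
    rfl

lemma cw_cns (ψ : X → Y) (c : X) {m : ℕ} :
    (cw (A := A) ψ (m := m + 1)).comp (cns c) = (cns (ψ c)).comp (cw ψ) := by
  refine Finsupp.addHom_ext fun y a => ?_
  simp only [AddMonoidHom.comp_apply, cns_single, cw_single, Fin.comp_cons]

lemma pa_cw (ψ : X → Y) : ∀ m : ℕ, (pa Y A m).comp (cw ψ) = (cw ψ).comp (pa X A m)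
  | 0 => by
    refine Finsupp.addHom_ext fun x a => ?_
    simp only [AddMonoidHom.comp_apply, cw_single, pa_zero_single]
    rfl
  | m + 1 => by
    refine Finsupp.addHom_ext fun x a => ?_
    have htail : Fin.tail (ψ ∘ x) = ψ ∘ Fin.tail x := rfl
    simp only [AddMonoidHom.comp_apply, cw_single, pa_succ_single, map_sub, htail,
      Function.comp_apply]
    have h1 : pa Y A m (cw (A := A) ψ (single (Fin.tail x) a))
        = cw ψ (pa X A m (single (Fin.tail x) a)) := by
      have := congrArg (fun f : Ch X A (m+1) →+ Ch Y A m => f (single (Fin.tail x) a))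
        (pa_cw ψ m)
      simpa using this
    have h2 : cns (ψ (x 0)) (pa Y A m (cw (A := A) ψ (single (Fin.tail x) a)))
        = cw ψ (cns (x 0) (pa X A m (single (Fin.tail x) a))) := by
      rw [h1]
      have := congrArg (fun f : Ch X A m →+ Ch Y A (m+1) =>
        f (pa X A m (single (Fin.tail x) a))) (cw_cns (A := A) ψ (x 0) (m := m))
      simpa using this.symm
    rw [← h2, cw_single]

lemma cons_tail_face {m : ℕ} (x : Fin (m + 2) → X) (j : Fin (m + 1)) :
    Fin.cons (x 0) (Fin.tail x ∘ j.succAbove) = x ∘ (j.succ).succAbove := by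
  funext i
  refine Fin.cases ?_ (fun i' => ?_) i
  · have h : (j.succ).succAbove 0 = 0 := by
      rw [Fin.succAbove_of_castSucc_lt]
      · rfl
      · simp [Fin.castSucc_zero, Fin.succ_pos]
    simp [h]
  · simp only [Fin.cons_succ, Function.comp_apply, Fin.succ_succAbove_succ]
    rfl

/-- The face formula for `pa`. -/
lemma pa_faces : ∀ (m : ℕ) (x : Fin (m + 1) → X) (a : A),
    pa X A m (single x a) =
      ∑ j : Fin (m + 1), ((-1 : ℤ) ^ (j : ℕ)) • single (x ∘ j.succAbove) a
  | 0, x, a => by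
    rw [pa_zero_single, Fin.sum_univ_one]
    simp only [Fin.val_zero, pow_zero, one_smul]
    exact congrArg (fun t => single t a) (funext fun i : Fin 0 => i.elim0)
  | m + 1, x, a => by
    rw [pa_succ_single, pa_faces m (Fin.tail x) a, map_sum]
    conv_rhs => rw [Fin.sum_univ_succ]
    have h0 : x ∘ (0 : Fin (m + 2)).succAbove = Fin.tail x := by
      rw [Fin.succAbove_zero]; rfl
    rw [h0]
    have hj : ∀ j : Fin (m + 1),
        ((-1 : ℤ) ^ ((j.succ : Fin (m+2)) : ℕ)) • single (x ∘ (j.succ).succAbove) a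
          = -(((-1 : ℤ) ^ (j : ℕ)) • single (Fin.tail x ∘ j.succAbove) a |> cns (x 0)) := by
      intro j
      rw [map_zsmul, cns_single, cons_tail_face, Fin.val_succ, pow_succ]
      rw [mul_comm, mul_smul]
      simp
    rw [Finset.sum_congr rfl (fun j _ => hj j), Finset.sum_neg_distrib]
    simp only [Fin.val_zero, pow_zero, one_smul]
    rw [sub_eq_add_neg]

end

end IHAux

namespace IHAux

open InvariantHomology Finsupp

noncomputable section

variable {X A : Type*} [Group X] [AddCommGroup A]

/-- Inhomogeneous coordinates of a homogeneous tuple. -/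
def dif {m : ℕ} (x : Fin (m + 1) → X) : Fin m → X :=
  fun i => (x i.castSucc)⁻¹ * x i.succ

/-- Homogeneous-to-inhomogeneous comparison map. -/
def nuh {m : ℕ} : Ch X A (m + 1) →+ Ch X A m :=
  Finsupp.mapDomain.addMonoidHom dif

/-- Inhomogeneous-to-homogeneous comparison map. -/
def muh {m : ℕ} : Ch X A m →+ Ch X A (m + 1) :=
  Finsupp.mapDomain.addMonoidHom Fin.partialProd

lemma nuh_single {m : ℕ} (x : Fin (m + 1) → X) (a : A) :
    nuh (single x a) = single (dif x) a := Finsupp.mapDomain_single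

lemma muh_single {m : ℕ} (k : Fin m → X) (a : A) :
    muh (single k a) = single (Fin.partialProd k) a := Finsupp.mapDomain_single

lemma dif_pp {m : ℕ} (k : Fin m → X) : dif (Fin.partialProd k) = k := by
  funext i
  simp [dif, Fin.partialProd_succ]

lemma pp_dif {m : ℕ} (x : Fin (m + 1) → X) (j : Fin (m + 1)) :
    Fin.partialProd (dif x) j = (x 0)⁻¹ * x j := by
  induction j using Fin.induction with
  | zero => simp
  | succ j ih =>
    rw [Fin.partialProd_succ, ih]
    simp [dif, mul_assoc]

lemma pp_dif_of_one {m : ℕ} (x : Fin (m + 1) → X) (h : x 0 = 1) :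
    Fin.partialProd (dif x) = x := by
  funext j; rw [pp_dif, h]; simp

lemma dif_smul {m : ℕ} (c : X) (x : Fin (m + 1) → X) :
    dif (fun i => c * x i) = dif x := by
  funext i; simp [dif, mul_assoc]

lemma nuh_muh {m : ℕ} : (nuh).comp (muh) = AddMonoidHom.id (Ch X A m) := by
  refine Finsupp.addHom_ext fun k a => ?_
  simp [nuh_single, muh_single, dif_pp]

lemma nuh_muh_apply {m : ℕ} (z : Ch X A m) : nuh (muh z) = z := by
  have := congrArg (fun f : Ch X A m →+ Ch X A m => f z) (nuh_muh (X := X) (A := A) (m := m))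
  simpa using this

lemma succAbove_succ_zero {m : ℕ} (j : Fin (m + 1)) :
    (j.succ : Fin (m + 2)).succAbove 0 = 0 := by
  rw [Fin.succAbove_of_castSucc_lt] <;> simp [Fin.succ_pos]

lemma dif_face_zero {m : ℕ} (x : Fin (m + 2) → X) :
    dif (x ∘ (0 : Fin (m + 2)).succAbove) = Fin.tail (dif x) := by
  funext i
  simp only [dif, Fin.succAbove_zero, Fin.tail, Function.comp_apply]
  rfl

lemma dif_face_mid {m : ℕ} (x : Fin (m + 2) → X) (j : Fin (m + 1)) :
    dif (x ∘ (j.succ).succAbove) = Fin.contractNth j (· * ·) (dif x) := by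
  funext k
  have h := Fin.inv_partialProd_mul_eq_contractNth (dif x) j k
  rw [pp_dif, pp_dif, ← Fin.succ_succAbove_succ] at h
  rw [← h]
  simp [dif, mul_assoc]

lemma dif_face_last {m : ℕ} (x : Fin (m + 2) → X) :
    dif (x ∘ (Fin.last (m + 1)).succAbove) = Fin.init (dif x) := by
  funext i
  simp only [dif, Fin.succAbove_last, Fin.init, Function.comp_apply]
  rfl

lemma fm_eq_contractNth {m : ℕ} (k : Fin (m + 1) → X) (i : Fin m) :
    fm k i = Fin.contractNth i.castSucc (· * ·) k := by
  funext j
  simp only [fm, Fin.contractNth, Fin.coe_castSucc]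
  rcases lt_trichotomy (j : ℕ) (i : ℕ) with h | h | h
  · rw [if_pos h, if_pos h]
  · have hj : j = i := Fin.ext h
    subst hj
    rw [if_neg (lt_irrefl _), if_neg (lt_irrefl _), if_pos rfl, if_pos rfl]
  · have hne : ¬ (j : ℕ) < (i : ℕ) := by omega
    have hne2 : j ≠ i := fun hh => by rw [hh] at h; exact lt_irrefl _ h
    have hne3 : ¬ (j : ℕ) = (i : ℕ) := by omega
    rw [if_neg hne, if_neg hne, if_neg hne2, if_neg hne3]

/-- `nuh` intertwines the homogeneous differential with the bar differential. -/
lemma bd_nuh (m : ℕ) :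
    (bd X A m).comp (nuh) = (nuh).comp (pa X A (m + 1)) := by
  refine Finsupp.addHom_ext fun x a => ?_
  rw [AddMonoidHom.comp_apply, AddMonoidHom.comp_apply, nuh_single, bd_single,
    pa_faces, map_sum]
  simp only [map_zsmul, nuh_single]
  rw [Fin.sum_univ_succ, Fin.sum_univ_castSucc]
  rw [dif_face_zero]
  have hmid : ∀ i : Fin m,
      ((-1 : ℤ) ^ (((i.castSucc).succ : Fin (m + 2)) : ℕ))
          • single (dif (x ∘ ((i.castSucc).succ).succAbove)) a
        = ((-1 : ℤ) ^ ((i : ℕ) + 1)) • single (fm (dif x) i) a := by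
    intro i
    rw [dif_face_mid, ← fm_eq_contractNth]
    simp
  have hlast :
      ((-1 : ℤ) ^ (((Fin.last m).succ : Fin (m + 2)) : ℕ))
          • single (dif (x ∘ ((Fin.last m).succ).succAbove)) a
        = ((-1 : ℤ) ^ (m + 1)) • single (Fin.init (dif x)) a := by
    rw [Fin.succ_last, dif_face_last]
    simp
  rw [Finset.sum_congr rfl (fun i _ => hmid i), hlast]
  simp only [Fin.val_zero, pow_zero, one_smul]
  abel

lemma pp_tail {m : ℕ} (k : Fin (m + 1) → X) :
    Fin.partialProd (Fin.tail k) = fun j => (k 0)⁻¹ * Fin.tail (Fin.partialProd k) j := by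
  funext j
  induction j using Fin.induction with
  | zero =>
    have h1 : Fin.partialProd k 1 = k 0 := by
      rw [show (1 : Fin (m + 2)) = (0 : Fin (m + 1)).succ from rfl, Fin.partialProd_succ]
      simp
    simp [Fin.tail, h1]
  | succ j ih =>
    rw [Fin.partialProd_succ, ih]
    simp only [Fin.tail, Fin.partialProd_succ, Fin.succ_castSucc, mul_assoc]

lemma pp_fm {m : ℕ} (k : Fin (m + 1) → X) (i : Fin m) :
    Fin.partialProd (fm k i) = Fin.partialProd k ∘ ((i.castSucc).succ).succAbove := by
  have h1 : (Fin.partialProd k ∘ ((i.castSucc).succ).succAbove) 0 = 1 := by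
    simp [succAbove_succ_zero]
  have h2 : dif (Fin.partialProd k ∘ ((i.castSucc).succ).succAbove) = fm k i := by
    rw [dif_face_mid, dif_pp, ← fm_eq_contractNth]
  rw [← h2, pp_dif_of_one _ h1]

lemma pp_init {m : ℕ} (k : Fin (m + 1) → X) :
    Fin.partialProd (Fin.init k) = Fin.partialProd k ∘ (Fin.last (m + 1)).succAbove := by
  have h1 : (Fin.partialProd k ∘ (Fin.last (m + 1)).succAbove) 0 = 1 := by
    simp [Fin.succAbove_last]
  have h2 : dif (Fin.partialProd k ∘ (Fin.last (m + 1)).succAbove) = Fin.init k := by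
    rw [dif_face_last, dif_pp]
  rw [← h2, pp_dif_of_one _ h1]

/-- The discrepancy between `pa ∘ muh` and `muh ∘ bd` is a single translation pair. -/
lemma pa_muh_single {m : ℕ} (k : Fin (m + 1) → X) (a : A) :
    pa X A (m + 1) (muh (single k a)) =
      muh (bd X A m (single k a))
        + single (Fin.tail (Fin.partialProd k)) a
        - single (fun i => (k 0)⁻¹ * Fin.tail (Fin.partialProd k) i) a := by
  rw [muh_single, pa_faces, bd_single]
  rw [map_add, map_add, map_sum]
  simp only [map_zsmul, muh_single]
  rw [Fin.sum_univ_succ, Fin.sum_univ_castSucc]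
  have h0 : Fin.partialProd k ∘ (0 : Fin (m + 2)).succAbove = Fin.tail (Fin.partialProd k) := by
    rw [Fin.succAbove_zero]; rfl
  rw [h0]
  have hmid : ∀ i : Fin m,
      ((-1 : ℤ) ^ (((i.castSucc).succ : Fin (m + 2)) : ℕ))
          • single (Fin.partialProd k ∘ ((i.castSucc).succ).succAbove) a
        = ((-1 : ℤ) ^ ((i : ℕ) + 1)) • single (Fin.partialProd (fm k i)) a := by
    intro i
    rw [pp_fm]
    simp
  have hlast :
      ((-1 : ℤ) ^ (((Fin.last m).succ : Fin (m + 2)) : ℕ))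
          • single (Fin.partialProd k ∘ ((Fin.last m).succ).succAbove) a
        = ((-1 : ℤ) ^ (m + 1)) • single (Fin.partialProd (Fin.init k)) a := by
    rw [Fin.succ_last, pp_init]
    simp
  rw [Finset.sum_congr rfl (fun i _ => hmid i), hlast, pp_tail]
  simp only [Fin.val_zero, pow_zero, one_smul]
  abel

/-- Composition with a translation-invariant functional turns the homogeneous differential
into the bar differential. -/
lemma disc_absorb {B : Type*} [AddCommGroup B] {m : ℕ} (F : Ch X A (m + 1) →+ B)
    (hF : ∀ (c : X) (x : Fin (m + 1) → X) (a : A),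
      F (single (fun i => c * x i) a) = F (single x a)) :
    F.comp ((pa X A (m + 1)).comp muh) = F.comp (muh.comp (bd X A m)) := by
  refine Finsupp.addHom_ext fun k a => ?_
  simp only [AddMonoidHom.comp_apply]
  rw [pa_muh_single, map_sub, map_add]
  rw [hF ((k 0)⁻¹) (Fin.tail (Fin.partialProd k)) a]
  abel

end

end IHAux

namespace IHAux

open InvariantHomology Finsupp SemidirectProduct

noncomputable section

section Helpers

lemma comp_sum' {M N P ι : Type*} [AddCommMonoid M] [AddCommMonoid N] [AddCommMonoid P]
    (g : N →+ P) (s : Finset ι) (f : ι → M →+ N) :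
    g.comp (∑ i ∈ s, f i) = ∑ i ∈ s, g.comp (f i) := by
  ext z
  simp [AddMonoidHom.finset_sum_apply, map_sum]

lemma sum_comp' {M N P ι : Type*} [AddCommMonoid M] [AddCommMonoid N] [AddCommMonoid P]
    (g : P →+ M) (s : Finset ι) (f : ι → M →+ N) :
    (∑ i ∈ s, f i).comp g = ∑ i ∈ s, (f i).comp g := by
  ext z
  simp [AddMonoidHom.finset_sum_apply]

end Helpers

section Trl

variable {X A : Type*} [Group X] [AddCommGroup A]

/-- Left translation on homogeneous chains. -/
def trl (c : X) {m : ℕ} : Ch X A m →+ Ch X A m := cw (fun y => c * y)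

lemma trl_single (c : X) {m : ℕ} (x : Fin m → X) (a : A) :
    trl c (single x a) = single (fun i => c * x i) a :=
  Finsupp.mapDomain_single

lemma trl_trl (c d : X) {m : ℕ} (z : Ch X A m) :
    trl c (trl d z) = trl (c * d) z := by
  induction z using Finsupp.induction_linear with
  | zero => simp
  | add f g hf hg => rw [map_add, map_add, map_add, hf, hg]
  | single x a =>
    rw [trl_single, trl_single, trl_single]
    congr 1
    funext i
    rw [mul_assoc]

lemma nuh_trl (c : X) {m : ℕ} (z : Ch X A (m + 1)) : nuh (trl c z) = nuh z := by
  induction z using Finsupp.induction_linear with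
  | zero => simp
  | add f g hf hg => rw [map_add, map_add, map_add, hf, hg]
  | single x a => rw [trl_single, nuh_single, nuh_single, dif_smul]

lemma pa_trl (c : X) (m : ℕ) :
    (pa X A m).comp (trl c) = (trl c).comp (pa X A m) :=
  pa_cw (fun y => c * y) m

end Trl

section SD

variable (G Q : Type*) [Group G] [Group Q] [MulDistribMulAction Q G]

/-- The semidirect product. -/
abbrev KK : Type _ := G ⋊[MulDistribMulAction.toMulAut Q G] Q

variable {G Q}

/-- `q`-twisted `G`-component. -/
def ψ (q : Q) (y : KK G Q) : G := (inr q * y).left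

/-- Retraction onto `G` inside `K`. -/
def rho' (y : KK G Q) : KK G Q := inl y.left

lemma inr_mul_left (q : Q) (x : KK G Q) : (inr q * x).left = q • x.left := by
  simp [SemidirectProduct.mul_left]

lemma inl_mul_left (g : G) (x : KK G Q) : (inl g * x).left = g * x.left := by
  simp [SemidirectProduct.mul_left]

lemma psi_inl (q : Q) (g : G) : ψ q (inl g) = q • g := by
  simp [ψ, inr_mul_left]

lemma smul_psi (q' q : Q) (y : KK G Q) : q' • ψ q y = ψ (q' * q) y := by
  show q' • (inr q * y).left = (inr (q' * q) * y).left
  rw [map_mul, mul_assoc]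
  simp [inr_mul_left]

lemma rho'_inl_mul (g : G) (y : KK G Q) : rho' (inl g * y) = inl g * rho' y := by
  show inl ((inl g * y).left) = inl g * inl y.left
  rw [inl_mul_left, map_mul]

lemma rho'_inr_mul (q : Q) (y : KK G Q) : rho' (inr q * y) = inl (ψ q y) := rfl

lemma psi_mul (q : Q) (c y : KK G Q) :
    ψ q (c * y) = (inr q * c).left * ψ ((inr q * c).right) y := by
  show (inr q * (c * y)).left = _
  rw [← mul_assoc]
  conv_lhs => rw [← inl_left_mul_inr_right (inr q * c), mul_assoc]
  rw [inl_mul_left]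
  rfl

lemma inr_mul_right (q : Q) (c : KK G Q) : (inr q * c).right = q * c.right := rfl

end SD

section HrecSec

variable (G Q A : Type*) [Group G] [Group Q] [MulDistribMulAction Q G] [AddCommGroup A]

/-- The comparison map `cw rho' - id`. -/
def gg (m : ℕ) : Ch (KK G Q) A m →+ Ch (KK G Q) A m :=
  cw rho' - AddMonoidHom.id _

lemma gg_single {m : ℕ} (x : Fin m → KK G Q) (a : A) :
    gg G Q A m (single x a) = single (rho' ∘ x) a - single x a := by
  simp [gg, cw_single]

lemma gg_trl_inl (e : G) (m : ℕ) :
    (gg G Q A m).comp (trl (inl e)) = (trl (inl e)).comp (gg G Q A m) := by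
  refine Finsupp.addHom_ext fun x a => ?_
  simp only [AddMonoidHom.comp_apply, trl_single, gg_single, map_sub, trl_single]
  congr 2
  funext i
  exact rho'_inl_mul e (x i)

lemma gg_pa (m : ℕ) :
    (gg G Q A m).comp (pa (KK G Q) A m) = (pa (KK G Q) A m).comp (gg G Q A (m + 1)) := by
  rw [gg, gg, AddMonoidHom.sub_comp, AddMonoidHom.comp_sub, pa_cw]
  simp [AddMonoidHom.comp_id, AddMonoidHom.id_comp]

lemma pa_zero_gg : (pa (KK G Q) A 0).comp (gg G Q A 1) = 0 := by
  refine Finsupp.addHom_ext fun x a => ?_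
  simp only [AddMonoidHom.comp_apply, gg_single, map_sub, pa_zero_single,
    AddMonoidHom.zero_apply]
  have h : Fin.tail (rho' ∘ x) = Fin.tail x := funext fun i => i.elim0
  rw [h, sub_self]

/-- The recursive `G`-equivariant chain homotopy between `cw rho'` and the identity. -/
def Hrec : ∀ m : ℕ, Ch (KK G Q) A (m + 1) →+ Ch (KK G Q) A (m + 2)
  | 0 => Finsupp.liftAddHom fun x =>
      (trl (rho' (x 0))).comp ((cns 1).comp ((gg G Q A 1).comp
        (Finsupp.singleAddHom (fun i => (rho' (x 0))⁻¹ * x i))))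
  | m + 1 => Finsupp.liftAddHom fun x =>
      (trl (rho' (x 0))).comp ((cns 1).comp
        (((gg G Q A (m + 2) - (Hrec m).comp (pa (KK G Q) A (m + 1))).comp
          (Finsupp.singleAddHom (fun i => (rho' (x 0))⁻¹ * x i)))))

lemma Hrec_zero_single (x : Fin 1 → KK G Q) (a : A) :
    Hrec G Q A 0 (single x a) =
      trl (rho' (x 0)) (cns 1 (gg G Q A 1 (single (fun i => (rho' (x 0))⁻¹ * x i) a))) := by
  simp [Hrec, Finsupp.liftAddHom_apply_single]

lemma Hrec_succ_single {m : ℕ} (x : Fin (m + 2) → KK G Q) (a : A) :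
    Hrec G Q A (m + 1) (single x a) =
      trl (rho' (x 0)) (cns 1
        (gg G Q A (m + 2) (single (fun i => (rho' (x 0))⁻¹ * x i) a)
          - Hrec G Q A m (pa (KK G Q) A (m + 1) (single (fun i => (rho' (x 0))⁻¹ * x i) a)))) := by
  simp [Hrec, Finsupp.liftAddHom_apply_single]

lemma norm_aux (e : G) (x : Fin (m' + 1) → KK G Q) :
    (fun i => (rho' ((fun j => inl e * x j) 0))⁻¹ * (fun j => inl e * x j) i)
      = fun i => (rho' (x 0))⁻¹ * x i := by
  funext i
  rw [rho'_inl_mul]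
  simp [mul_assoc]

/-- `G`-equivariance of `Hrec`. -/
lemma Hrec_trl (m : ℕ) (e : G) :
    (Hrec G Q A m).comp (trl (inl e)) = (trl (inl e)).comp (Hrec G Q A m) := by
  cases m with
  | zero =>
    refine Finsupp.addHom_ext fun x a => ?_
    simp only [AddMonoidHom.comp_apply, trl_single, Hrec_zero_single]
    rw [norm_aux, rho'_inl_mul, ← trl_trl]
  | succ m =>
    refine Finsupp.addHom_ext fun x a => ?_
    simp only [AddMonoidHom.comp_apply, trl_single, Hrec_succ_single]
    rw [norm_aux, rho'_inl_mul, ← trl_trl]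

lemma trl_norm_single {m' : ℕ} (x : Fin m' → KK G Q) (c : KK G Q) (a : A) :
    trl c (single (fun i => c⁻¹ * x i) a) = single x a := by
  rw [trl_single]
  congr 1
  funext i
  simp

lemma pa_Hrec_zero :
    (pa (KK G Q) A 1).comp (Hrec G Q A 0) = gg G Q A 1 := by
  refine Finsupp.addHom_ext fun x a => ?_
  rw [AddMonoidHom.comp_apply, Hrec_zero_single]
  set u := gg G Q A 1 (single (fun i => (rho' (x 0))⁻¹ * x i) a) with hu
  have h1 : pa (KK G Q) A 1 (trl (rho' (x 0)) (cns 1 u))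
      = trl (rho' (x 0)) (pa (KK G Q) A 1 (cns 1 u)) := by
    have := congrArg (fun f : Ch (KK G Q) A 2 →+ Ch (KK G Q) A 1 => f (cns 1 u))
      (pa_trl (A := A) (rho' (x 0)) 1)
    simpa using this
  rw [h1, pa_cns_apply]
  have h2 : pa (KK G Q) A 0 u = 0 := by
    rw [hu]
    have := congrArg (fun f : Ch (KK G Q) A 1 →+ Ch (KK G Q) A 0 =>
      f (single (fun i => (rho' (x 0))⁻¹ * x i) a)) (pa_zero_gg G Q A)
    simpa using this
  rw [h2, map_zero, sub_zero, hu]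
  have h3 : trl (rho' (x 0)) (gg G Q A 1 (single (fun i => (rho' (x 0))⁻¹ * x i) a))
      = gg G Q A 1 (trl (rho' (x 0)) (single (fun i => (rho' (x 0))⁻¹ * x i) a)) := by
    have hx : rho' (x 0) = inl ((x 0).left) := rfl
    rw [hx]
    have := congrArg (fun f : Ch (KK G Q) A 1 →+ Ch (KK G Q) A 1 =>
      f (single (fun i => (inl ((x 0).left) : KK G Q)⁻¹ * x i) a)) (gg_trl_inl G Q A ((x 0).left) 1)
    simpa using this.symm
  rw [h3, trl_norm_single]

lemma pa_Hrec_succ :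
    ∀ m : ℕ, (pa (KK G Q) A (m + 2)).comp (Hrec G Q A (m + 1))
      = gg G Q A (m + 2) - (Hrec G Q A m).comp (pa (KK G Q) A (m + 1)) := by
  intro m
  induction m with
  | zero =>
    refine Finsupp.addHom_ext fun x a => ?_
    rw [AddMonoidHom.comp_apply, Hrec_succ_single]
    set xb := (fun i => (rho' (x 0))⁻¹ * x i) with hxb
    set u := gg G Q A 2 (single xb a) - Hrec G Q A 0 (pa (KK G Q) A 1 (single xb a)) with hu
    have h1 : pa (KK G Q) A 2 (trl (rho' (x 0)) (cns 1 u))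
        = trl (rho' (x 0)) (pa (KK G Q) A 2 (cns 1 u)) := by
      have := congrArg (fun f => f (cns 1 u)) (pa_trl (A := A) (rho' (x 0)) 2)
      simpa using this
    rw [h1, pa_cns_apply]
    have hpu : pa (KK G Q) A 1 u = 0 := by
      rw [hu, map_sub]
      have e1 : pa (KK G Q) A 1 (Hrec G Q A 0 (pa (KK G Q) A 1 (single xb a)))
          = gg G Q A 1 (pa (KK G Q) A 1 (single xb a)) := by
        have := congrArg (fun f => f (pa (KK G Q) A 1 (single xb a))) (pa_Hrec_zero G Q A)
        simpa using this
      have e2 : pa (KK G Q) A 1 (gg G Q A 2 (single xb a))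
          = gg G Q A 1 (pa (KK G Q) A 1 (single xb a)) := by
        have := congrArg (fun f => f (single xb a)) (gg_pa G Q A 1)
        simpa using this.symm
      rw [e1, e2, sub_self]
    rw [hpu, map_zero, sub_zero, hu, map_sub]
    have h3 : trl (rho' (x 0)) (gg G Q A 2 (single xb a))
        = gg G Q A 2 (single x a) := by
      have hx : rho' (x 0) = inl ((x 0).left) := rfl
      have := congrArg (fun f => f (single xb a)) (gg_trl_inl G Q A ((x 0).left) 2)
      simp only [AddMonoidHom.comp_apply] at this
      rw [hx, ← this, hxb]
      congr 1
      rw [← hx, trl_norm_single]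
    have h4 : trl (rho' (x 0)) (Hrec G Q A 0 (pa (KK G Q) A 1 (single xb a)))
        = Hrec G Q A 0 (pa (KK G Q) A 1 (single x a)) := by
      have hx : rho' (x 0) = inl ((x 0).left) := rfl
      have e3 := congrArg (fun f => f (pa (KK G Q) A 1 (single xb a)))
        (Hrec_trl G Q A 0 ((x 0).left))
      simp only [AddMonoidHom.comp_apply] at e3
      rw [hx, ← e3]
      congr 1
      have e4 := congrArg (fun f => f (single xb a)) (pa_trl (A := A) (inl ((x 0).left) : KK G Q) 1)
      simp only [AddMonoidHom.comp_apply] at e4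
      rw [← e4, ← hx, trl_norm_single]
    rw [h3, h4]
    rfl
  | succ m ih =>
    refine Finsupp.addHom_ext fun x a => ?_
    rw [AddMonoidHom.comp_apply, Hrec_succ_single]
    set xb := (fun i => (rho' (x 0))⁻¹ * x i) with hxb
    set u := gg G Q A (m + 3) (single xb a)
      - Hrec G Q A (m + 1) (pa (KK G Q) A (m + 2) (single xb a)) with hu
    have h1 : pa (KK G Q) A (m + 3) (trl (rho' (x 0)) (cns 1 u))
        = trl (rho' (x 0)) (pa (KK G Q) A (m + 3) (cns 1 u)) := by
      have := congrArg (fun f => f (cns 1 u)) (pa_trl (A := A) (rho' (x 0)) (m + 3))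
      simpa using this
    rw [h1, pa_cns_apply]
    have hpu : pa (KK G Q) A (m + 2) u = 0 := by
      rw [hu, map_sub]
      have e1 : pa (KK G Q) A (m + 2) (Hrec G Q A (m + 1) (pa (KK G Q) A (m + 2) (single xb a)))
          = gg G Q A (m + 2) (pa (KK G Q) A (m + 2) (single xb a)) := by
        have := congrArg (fun f => f (pa (KK G Q) A (m + 2) (single xb a))) ih
        simp only [AddMonoidHom.comp_apply, AddMonoidHom.sub_apply] at this
        rw [this]
        have hpp := congrArg (fun f => f (single xb a)) (pa_pa (X := KK G Q) (A := A) (m := m + 1))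
        simp only [AddMonoidHom.comp_apply, AddMonoidHom.zero_apply] at hpp
        rw [hpp, map_zero, sub_zero]
      have e2 : pa (KK G Q) A (m + 2) (gg G Q A (m + 3) (single xb a))
          = gg G Q A (m + 2) (pa (KK G Q) A (m + 2) (single xb a)) := by
        have := congrArg (fun f => f (single xb a)) (gg_pa G Q A (m + 2))
        simpa using this.symm
      rw [e1, e2, sub_self]
    rw [hpu, map_zero, sub_zero, hu, map_sub]
    have h3 : trl (rho' (x 0)) (gg G Q A (m + 3) (single xb a))
        = gg G Q A (m + 3) (single x a) := by
      have hx : rho' (x 0) = inl ((x 0).left) := rfl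
      have := congrArg (fun f => f (single xb a)) (gg_trl_inl G Q A ((x 0).left) (m + 3))
      simp only [AddMonoidHom.comp_apply] at this
      rw [hx, ← this, hxb]
      congr 1
      rw [← hx, trl_norm_single]
    have h4 : trl (rho' (x 0)) (Hrec G Q A (m + 1) (pa (KK G Q) A (m + 2) (single xb a)))
        = Hrec G Q A (m + 1) (pa (KK G Q) A (m + 2) (single x a)) := by
      have hx : rho' (x 0) = inl ((x 0).left) := rfl
      have e3 := congrArg (fun f => f (pa (KK G Q) A (m + 2) (single xb a)))
        (Hrec_trl G Q A (m + 1) ((x 0).left))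
      simp only [AddMonoidHom.comp_apply] at e3
      rw [hx, ← e3]
      congr 1
      have e4 := congrArg (fun f => f (single xb a))
        (pa_trl (A := A) (inl ((x 0).left) : KK G Q) (m + 2))
      simp only [AddMonoidHom.comp_apply] at e4
      rw [← e4, ← hx, trl_norm_single]
    rw [h3, h4]
    rfl

end HrecSec

end

end IHAux

namespace IHAux

open InvariantHomology Finsupp SemidirectProduct

noncomputable section

section Maps

set_option linter.unusedSectionVars false

variable (G Q A : Type*) [Group G] [Group Q] [MulDistribMulAction Q G] [AddCommGroup A]
  [Fintype Q]

/-- Homogeneous transfer. -/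
def TR (n : ℕ) : Ch (KK G Q) A n →+ Ch G A n := ∑ q : Q, cw (ψ q)

/-- The transfer map on inhomogeneous chains. -/
def TT (n : ℕ) : Ch (KK G Q) A n →+ Ch G A n :=
  (nuh.comp (TR G Q A (n + 1))).comp muh

/-- The map induced by the inclusion `G → G ⋊ Q`. -/
def II (n : ℕ) : Ch G A n →+ Ch (KK G Q) A n :=
  cw (fun g : G => (inl g : KK G Q))

/-- Homogeneous homotopy (summed over `Q`). -/
def HT (n : ℕ) : Ch (KK G Q) A (n + 1) →+ Ch (KK G Q) A (n + 2) :=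
  ∑ q : Q, (Hrec G Q A n).comp (trl (inr q))

/-- The chain homotopy between `II ∘ TT` and `card Q • id`. -/
def hh (n : ℕ) : Ch (KK G Q) A n →+ Ch (KK G Q) A (n + 1) :=
  (nuh.comp (HT G Q A n)).comp muh

variable {G Q A}

lemma TT_single {n : ℕ} (x : Fin n → KK G Q) (a : A) :
    TT G Q A n (single x a) = ∑ q : Q, single (dif (ψ q ∘ Fin.partialProd x)) a := by
  rw [TT, AddMonoidHom.comp_apply, AddMonoidHom.comp_apply, muh_single, TR,
    AddMonoidHom.finset_sum_apply, map_sum]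
  refine Finset.sum_congr rfl fun q _ => ?_
  rw [cw_single, nuh_single]

lemma II_single {n : ℕ} (w : Fin n → G) (a : A) :
    II G Q A n (single w a) = single (fun i => (inl (w i) : KK G Q)) a :=
  Finsupp.mapDomain_single

lemma fm_hom {H H' : Type*} [Group H] [Group H'] (f : H →* H') {n : ℕ}
    (k : Fin (n + 1) → H) (i : Fin n) :
    fm (fun j => f (k j)) i = fun j => f (fm k i j) := by
  funext j
  simp only [fm]
  split_ifs <;> simp

lemma bd_II (n : ℕ) :
    (bd (KK G Q) A n).comp (II G Q A (n + 1)) = (II G Q A n).comp (bd G A n) := by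
  refine Finsupp.addHom_ext fun k a => ?_
  rw [AddMonoidHom.comp_apply, AddMonoidHom.comp_apply, II_single, bd_single, bd_single,
    map_add, map_add, map_sum, map_zsmul, II_single, II_single]
  have h1 : Fin.tail (fun j => (inl (k j) : KK G Q)) = fun j => (inl (Fin.tail k j) : KK G Q) :=
    rfl
  have h3 : Fin.init (fun j => (inl (k j) : KK G Q)) = fun j => (inl (Fin.init k j) : KK G Q) :=
    rfl
  rw [h1, h3]
  congr 1
  congr 1
  refine Finset.sum_congr rfl fun i _ => ?_
  rw [map_zsmul, II_single, fm_hom (inl : G →* KK G Q) k i]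

lemma TINV (n : ℕ) (c : KK G Q) (x : Fin (n + 1) → KK G Q) (a : A) :
    (nuh.comp (TR G Q A (n + 1))) (single (fun i => c * x i) a)
      = (nuh.comp (TR G Q A (n + 1))) (single x a) := by
  rw [AddMonoidHom.comp_apply, AddMonoidHom.comp_apply, TR,
    AddMonoidHom.finset_sum_apply, AddMonoidHom.finset_sum_apply, map_sum, map_sum]
  refine Fintype.sum_equiv (Equiv.mulRight c.right) _ _ fun q => ?_
  rw [cw_single, cw_single, nuh_single, nuh_single]
  congr 1
  have h1 : ψ q ∘ (fun i => c * x i) = fun i => (inr q * c).left * ψ ((inr q * c).right) (x i) :=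
    funext fun i => psi_mul q c (x i)
  rw [h1]
  have h2 := dif_smul ((inr q * c).left) (fun i => ψ ((inr q * c).right) (x i))
  rw [h2]
  rfl

lemma bd_TT (n : ℕ) :
    (bd G A n).comp (TT G Q A (n + 1)) = (TT G Q A n).comp (bd (KK G Q) A n) := by
  have htr : (pa G A (n + 1)).comp (TR G Q A (n + 2))
      = (TR G Q A (n + 1)).comp (pa (KK G Q) A (n + 1)) := by
    rw [TR, TR, comp_sum', sum_comp']
    exact Finset.sum_congr rfl fun q _ => pa_cw (ψ q) (n + 1)
  have habs := disc_absorb (X := KK G Q) (A := A) (m := n)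
    (nuh.comp (TR G Q A (n + 1))) (fun c x a => TINV n c x a)
  refine AddMonoidHom.ext fun z => ?_
  show bd G A n (nuh (TR G Q A (n + 2) (muh z))) = TT G Q A n (bd (KK G Q) A n z)
  have hb := DFunLike.congr_fun (bd_nuh (X := G) (A := A) n) (TR G Q A (n + 2) (muh z))
  simp only [AddMonoidHom.comp_apply] at hb
  rw [hb]
  have ht := DFunLike.congr_fun htr (muh z)
  simp only [AddMonoidHom.comp_apply] at ht
  rw [ht]
  have hd := DFunLike.congr_fun habs z
  simp only [AddMonoidHom.comp_apply] at hd
  rw [hd]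
  rfl

lemma smul_dif (q' : Q) {m : ℕ} (y : Fin (m + 1) → G) :
    (fun i => q' • dif y i) = dif (fun j => q' • y j) := by
  funext i
  simp [dif, smul_mul', smul_inv']

lemma qch_TT (q' : Q) (n : ℕ) :
    (qch G A Q q' n).comp (TT G Q A n) = TT G Q A n := by
  refine Finsupp.addHom_ext fun x a => ?_
  rw [AddMonoidHom.comp_apply, TT_single, map_sum]
  refine Fintype.sum_equiv (Equiv.mulLeft q') _ _ fun q => ?_
  rw [qch_single]
  congr 1
  show q' • dif (ψ q ∘ Fin.partialProd x) = dif (ψ (q' * q) ∘ Fin.partialProd x)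
  have h1 : ψ (q' * q) ∘ Fin.partialProd x = fun j => q' • (ψ q (Fin.partialProd x j)) :=
    funext fun j => (smul_psi q' q _).symm
  rw [h1, ← smul_dif]
  rfl

lemma pp_hom {H H' : Type*} [Monoid H] [Monoid H'] (f : H →* H') {n : ℕ} (w : Fin n → H) :
    Fin.partialProd (fun i => f (w i)) = fun j => f (Fin.partialProd w j) := by
  funext j
  induction j using Fin.induction with
  | zero => simp
  | succ j ih => rw [Fin.partialProd_succ, Fin.partialProd_succ, ih, map_mul]

lemma TT_II (n : ℕ) :
    (TT G Q A n).comp (II G Q A n) = ∑ q : Q, qch G A Q q n := by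
  refine Finsupp.addHom_ext fun w a => ?_
  rw [AddMonoidHom.comp_apply, II_single, TT_single, AddMonoidHom.finset_sum_apply]
  refine Finset.sum_congr rfl fun q _ => ?_
  rw [qch_single]
  congr 1
  have h1 : Fin.partialProd (fun i => (inl (w i) : KK G Q))
      = fun j => (inl (Fin.partialProd w j) : KK G Q) := pp_hom (inl : G →* KK G Q) w
  rw [h1]
  have h2 : ψ q ∘ (fun j => (inl (Fin.partialProd w j) : KK G Q))
      = fun j => q • Fin.partialProd w j := funext fun j => psi_inl q (Fin.partialProd w j)
  rw [h2]
  funext i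
  show _ = (q • w) i
  rw [Pi.smul_apply, ← smul_dif]
  have : dif (Fin.partialProd w) = w := dif_pp w
  simp [this]

lemma HINV (n : ℕ) (c : KK G Q) (x : Fin (n + 1) → KK G Q) (a : A) :
    (nuh.comp (HT G Q A n)) (single (fun i => c * x i) a)
      = (nuh.comp (HT G Q A n)) (single x a) := by
  rw [AddMonoidHom.comp_apply, AddMonoidHom.comp_apply, HT,
    AddMonoidHom.finset_sum_apply, AddMonoidHom.finset_sum_apply, map_sum, map_sum]
  refine Fintype.sum_equiv (Equiv.mulRight c.right) _ _ fun q => ?_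
  simp only [AddMonoidHom.comp_apply, trl_single]
  have h1 : (fun i => inr q * (c * x i))
      = fun i => (inl ((inr q * c).left) : KK G Q) * (inr ((inr q * c).right) * x i) := by
    funext i
    rw [← mul_assoc, ← mul_assoc, inl_left_mul_inr_right]
  rw [h1]
  have h2 : single (fun i => (inl ((inr q * c).left) : KK G Q) * (inr ((inr q * c).right) * x i)) a
      = trl (inl ((inr q * c).left)) (single (fun i => inr ((inr q * c).right) * x i) a) := by
    rw [trl_single]
  rw [h2]
  have h3 := DFunLike.congr_fun (Hrec_trl G Q A n ((inr q * c).left))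
    (single (fun i => inr ((inr q * c).right) * x i) a)
  simp only [AddMonoidHom.comp_apply] at h3
  rw [h3, nuh_trl, inr_mul_right]
  rfl

lemma dif_hom {H H' : Type*} [Group H] [Group H'] (f : H →* H') {m : ℕ} (y : Fin (m + 1) → H) :
    dif (fun i => f (y i)) = fun i => f (dif y i) := by
  funext i
  simp [dif]

lemma GG_SUM (n : ℕ) (k : Fin n → KK G Q) (a : A) :
    nuh ((∑ q : Q, (gg G Q A (n + 1)).comp (trl (inr q))) (muh (single k a)))
      = II G Q A n (TT G Q A n (single k a)) - (Fintype.card Q : ℤ) • single k a := by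
  rw [muh_single, AddMonoidHom.finset_sum_apply, map_sum]
  have hterm : ∀ q : Q,
      nuh ((gg G Q A (n + 1)).comp (trl (inr q)) (single (Fin.partialProd k) a))
        = single (fun i => (inl (dif (ψ q ∘ Fin.partialProd k) i) : KK G Q)) a
            - single k a := by
    intro q
    rw [AddMonoidHom.comp_apply, trl_single, gg_single, map_sub, nuh_single, nuh_single]
    congr 2
    · have h1 : rho' ∘ (fun i => inr q * Fin.partialProd k i)
          = fun i => (inl (ψ q (Fin.partialProd k i)) : KK G Q) := by
        funext i
        exact rho'_inr_mul q (Fin.partialProd k i)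
      rw [h1]
      have h2 := dif_hom (inl : G →* KK G Q) (fun i => ψ q (Fin.partialProd k i))
      rw [h2]
      rfl
    · rw [dif_smul, dif_pp]
  rw [Finset.sum_congr rfl (fun q _ => hterm q), Finset.sum_sub_distrib]
  congr 1
  · rw [TT_single, map_sum]
    refine Finset.sum_congr rfl fun q _ => ?_
    rw [II_single]
  · rw [Finset.sum_const, Finset.card_univ, natCast_zsmul]

lemma hom_key (n : ℕ) (z : Ch (KK G Q) A n) (hz : dd (KK G Q) A n z = 0) :
    bd (KK G Q) A n (hh G Q A n z)
      = II G Q A n (TT G Q A n z) - (Fintype.card Q : ℤ) • z := by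
  have key2 : ∀ (m : ℕ) (w : Ch (KK G Q) A m),
      nuh ((∑ q : Q, (gg G Q A (m + 1)).comp (trl (inr q))) (muh w))
        = II G Q A m (TT G Q A m w) - (Fintype.card Q : ℤ) • w := by
    intro m w
    induction w using Finsupp.induction_linear with
    | zero => simp
    | add f g hf hg =>
      rw [map_add, map_add, map_add, map_add, map_add, hf, hg, smul_add]
      abel
    | single x a => exact GG_SUM m x a
  cases n with
  | zero =>
    rw [hh, AddMonoidHom.comp_apply, AddMonoidHom.comp_apply]
    have hb := DFunLike.congr_fun (bd_nuh (X := KK G Q) (A := A) 0) (HT G Q A 0 (muh z))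
    simp only [AddMonoidHom.comp_apply] at hb
    rw [hb]
    have h1 : pa (KK G Q) A 1 (HT G Q A 0 (muh z))
        = (∑ q : Q, (gg G Q A 1).comp (trl (inr q))) (muh z) := by
      rw [HT, AddMonoidHom.finset_sum_apply, AddMonoidHom.finset_sum_apply, map_sum]
      refine Finset.sum_congr rfl fun q _ => ?_
      rw [AddMonoidHom.comp_apply, AddMonoidHom.comp_apply]
      exact DFunLike.congr_fun (pa_Hrec_zero G Q A) (trl (inr q) (muh z))
    rw [h1]
    exact key2 0 z
  | succ n =>
    rw [hh, AddMonoidHom.comp_apply, AddMonoidHom.comp_apply]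
    have hb := DFunLike.congr_fun (bd_nuh (X := KK G Q) (A := A) (n + 1)) (HT G Q A (n + 1) (muh z))
    simp only [AddMonoidHom.comp_apply] at hb
    rw [hb]
    have h1 : pa (KK G Q) A (n + 2) (HT G Q A (n + 1) (muh z))
        = (∑ q : Q, (gg G Q A (n + 2)).comp (trl (inr q))) (muh z)
            - HT G Q A n (pa (KK G Q) A (n + 1) (muh z)) := by
      rw [HT, HT, AddMonoidHom.finset_sum_apply, AddMonoidHom.finset_sum_apply,
        AddMonoidHom.finset_sum_apply, map_sum, ← Finset.sum_sub_distrib]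
      refine Finset.sum_congr rfl fun q _ => ?_
      simp only [AddMonoidHom.comp_apply]
      have := DFunLike.congr_fun (pa_Hrec_succ G Q A n) (trl (inr q) (muh z))
      simp only [AddMonoidHom.comp_apply, AddMonoidHom.sub_apply] at this
      rw [this]
      have hp := DFunLike.congr_fun (pa_trl (A := A) (inr q : KK G Q) (n + 1)) (muh z)
      simp only [AddMonoidHom.comp_apply] at hp
      exact congrArg (fun t => gg G Q A (n + 2) ((trl (inr q)) (muh z)) - Hrec G Q A n t) hp
    rw [h1, map_sub, key2 (n + 1) z]
    have h2 : nuh (HT G Q A n (pa (KK G Q) A (n + 1) (muh z))) = 0 := by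
      have habs := disc_absorb (X := KK G Q) (A := A) (m := n)
        (nuh.comp (HT G Q A n)) (fun c x a => HINV n c x a)
      have h3 := DFunLike.congr_fun habs z
      simp only [AddMonoidHom.comp_apply] at h3
      rw [h3]
      have hz' : bd (KK G Q) A n z = 0 := hz
      rw [hz', map_zero, map_zero, map_zero]
    rw [h2, sub_zero]

end Maps

end

end IHAux

namespace IHAux

open InvariantHomology Finsupp SemidirectProduct

noncomputable section

section Umaps

variable {X A : Type*} [Group X] [AddCommGroup A]

/-- Coefficientwise automorphism on chains. -/
def UU (X : Type*) [Group X] {A : Type*} [AddCommGroup A] (f : A ≃+ A) (n : ℕ) :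
    Ch X A n →+ Ch X A n :=
  Finsupp.mapRange.addMonoidHom f.toAddMonoidHom

lemma UU_single (f : A ≃+ A) {n : ℕ} (x : Fin n → X) (a : A) :
    UU X f n (single x a) = single x (f a) := by
  simp [UU]

lemma U_bd (f : A ≃+ A) (n : ℕ) :
    (bd X A n).comp (UU X f (n + 1)) = (UU X f n).comp (bd X A n) := by
  refine Finsupp.addHom_ext fun g a => ?_
  simp only [AddMonoidHom.comp_apply, UU_single, bd_single, map_add, map_sum, map_zsmul,
    UU_single]

lemma U_dd {n : ℕ} (f : A ≃+ A) (z : Ch X A n) :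
    dd X A n (UU X f n z) = UU X f (n - 1) (dd X A n z) := by
  cases n with
  | zero => simp [dd]
  | succ n =>
    have := DFunLike.congr_fun (U_bd (X := X) f n) z
    simp only [AddMonoidHom.comp_apply] at this
    exact this

lemma U_card {n : ℕ} {Q : Type*} [Fintype Q] (f : A ≃+ A)
    (hf : ∀ a : A, f ((Fintype.card Q : ℤ) • a) = a) (z : Ch X A n) :
    UU X f n ((Fintype.card Q : ℤ) • z) = z := by
  induction z using Finsupp.induction_linear with
  | zero => simp
  | add p r hp hr => rw [smul_add, map_add, hp, hr]
  | single x a => rw [Finsupp.smul_single, UU_single, hf]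

end Umaps

section Ucompat

set_option linter.unusedSectionVars false

variable {G Q A : Type*} [Group G] [Group Q] [MulDistribMulAction Q G] [AddCommGroup A]
  [Fintype Q]

lemma U_qch (f : A ≃+ A) (q : Q) (n : ℕ) (z : Ch G A n) :
    qch G A Q q n (UU G f n z) = UU G f n (qch G A Q q n z) := by
  induction z using Finsupp.induction_linear with
  | zero => simp
  | add p r hp hr => rw [map_add, map_add, map_add, map_add, hp, hr]
  | single x a => rw [UU_single, qch_single, qch_single, UU_single]

lemma U_II (f : A ≃+ A) (n : ℕ) (z : Ch G A n) :
    II G Q A n (UU G f n z) = UU (KK G Q) f n (II G Q A n z) := by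
  induction z using Finsupp.induction_linear with
  | zero => simp
  | add p r hp hr => rw [map_add, map_add, map_add, map_add, hp, hr]
  | single x a => rw [UU_single, II_single, II_single, UU_single]

end Ucompat

/-- The main isomorphism. -/
theorem main (G A Q : Type*) [Group G] [AddCommGroup A] [Group Q] [MulDistribMulAction Q G]
    [Fintype Q] (hA : Function.Bijective fun a : A => (Fintype.card Q : ℤ) • a) (n : ℕ) :
    Nonempty (HQ G A Q n ≃+ Hn (KK G Q) A n) := by
  classical
  -- the inverse of multiplication by |Q|
  let NN : A →+ A :=
    { toFun := fun a => (Fintype.card Q : ℤ) • a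
      map_zero' := smul_zero _
      map_add' := fun x y => smul_add _ x y }
  let eA : A ≃+ A := AddEquiv.ofBijective NN hA
  let f : A ≃+ A := eA.symm
  have hf : ∀ a : A, f ((Fintype.card Q : ℤ) • a) = a := fun a => eA.symm_apply_apply a
  -- auxiliary chain-level facts, at every level
  have hbdTT : ∀ (k : ℕ) (z : Ch (KK G Q) A (k + 1)),
      bd G A k (TT G Q A (k + 1) z) = TT G Q A k (bd (KK G Q) A k z) := by
    intro k z
    have := DFunLike.congr_fun (bd_TT (G := G) (Q := Q) (A := A) k) z
    simpa using this
  have hbdII : ∀ (k : ℕ) (z : Ch G A (k + 1)),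
      bd (KK G Q) A k (II G Q A (k + 1) z) = II G Q A k (bd G A k z) := by
    intro k z
    have := DFunLike.congr_fun (bd_II (G := G) (Q := Q) (A := A) k) z
    simpa using this
  have hTinv : ∀ (k : ℕ) (z : Ch (KK G Q) A k) (q : Q),
      qch G A Q q k (TT G Q A k z) = TT G Q A k z := by
    intro k z q
    have := DFunLike.congr_fun (qch_TT (G := G) (Q := Q) (A := A) q k) z
    simpa using this
  have hIcyc : ∀ z : Ch G A n, z ∈ cycQ G A Q n → II G Q A n z ∈ cyc (KK G Q) A n := by
    intro z hz
    have hz1 : dd G A n z = 0 := hz.1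
    show dd (KK G Q) A n (II G Q A n z) = 0
    cases n with
    | zero => rfl
    | succ k =>
      show bd (KK G Q) A k (II G Q A (k + 1) z) = 0
      rw [hbdII k z]
      have hz' : bd G A k z = 0 := hz1
      rw [hz', map_zero]
  have hSBmem : ∀ z : Ch (KK G Q) A n, z ∈ cyc (KK G Q) A n →
      UU G f n (TT G Q A n z) ∈ cycQ G A Q n := by
    intro z hz
    constructor
    · show dd G A n (UU G f n (TT G Q A n z)) = 0
      rw [U_dd]
      have hTdd : dd G A n (TT G Q A n z) = 0 := by
        cases n with
        | zero => rfl
        | succ k =>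
          show bd G A k (TT G Q A (k + 1) z) = 0
          rw [hbdTT k z]
          have hz' : bd (KK G Q) A k z = 0 := hz
          rw [hz', map_zero]
      rw [hTdd, map_zero]
    · intro q
      rw [U_qch, hTinv]
  -- subgroup-level homs
  let SI : cycQ G A Q n →+ cyc (KK G Q) A n :=
    ((II G Q A n).comp (cycQ G A Q n).subtype).codRestrict _
      (fun z => hIcyc z z.2)
  let SB : cyc (KK G Q) A n →+ cycQ G A Q n :=
    ((UU G f n).comp ((TT G Q A n).comp (cyc (KK G Q) A n).subtype)).codRestrict _
      (fun z => hSBmem z z.2)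
  have SI_val : ∀ z : cycQ G A Q n, (SI z : Ch (KK G Q) A n) = II G Q A n z := fun z => rfl
  have SB_val : ∀ z : cyc (KK G Q) A n, (SB z : Ch G A n) = UU G f n (TT G Q A n z) :=
    fun z => rfl
  -- quotient conditions
  have hα : (bdryQ G A Q n).addSubgroupOf (cycQ G A Q n) ≤
      ((bdry (KK G Q) A n).addSubgroupOf (cyc (KK G Q) A n)).comap SI := by
    intro x hx
    rw [AddSubgroup.mem_addSubgroupOf] at hx
    obtain ⟨y, hy, hyx⟩ := hx
    rw [AddSubgroup.mem_comap, AddSubgroup.mem_addSubgroupOf]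
    refine ⟨II G Q A (n + 1) y, ?_⟩
    rw [hbdII n y, hyx]
    rfl
  have hβ : (bdry (KK G Q) A n).addSubgroupOf (cyc (KK G Q) A n) ≤
      ((bdryQ G A Q n).addSubgroupOf (cycQ G A Q n)).comap SB := by
    intro x hx
    rw [AddSubgroup.mem_addSubgroupOf] at hx
    obtain ⟨y, hy⟩ := hx
    rw [AddSubgroup.mem_comap, AddSubgroup.mem_addSubgroupOf]
    refine ⟨UU G f (n + 1) (TT G Q A (n + 1) y), fun q => ?_, ?_⟩
    · rw [U_qch, hTinv]
    · have h1 := DFunLike.congr_fun (U_bd (X := G) f n) (TT G Q A (n + 1) y)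
      simp only [AddMonoidHom.comp_apply] at h1
      rw [h1, hbdTT n y, hy, SB_val]
  -- the induced maps on homology
  let α : HQ G A Q n →+ Hn (KK G Q) A n := QuotientAddGroup.map _ _ SI hα
  let β : Hn (KK G Q) A n →+ HQ G A Q n := QuotientAddGroup.map _ _ SB hβ
  have hleft : ∀ x : HQ G A Q n, β (α x) = x := by
    intro x
    refine QuotientAddGroup.induction_on x fun z => ?_
    show β (α (QuotientAddGroup.mk z)) = QuotientAddGroup.mk z
    rw [show α (QuotientAddGroup.mk z) = QuotientAddGroup.mk (SI z) from rfl]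
    rw [show β (QuotientAddGroup.mk (SI z)) = QuotientAddGroup.mk (SB (SI z)) from rfl]
    congr 1
    refine Subtype.ext ?_
    rw [SB_val, SI_val]
    have h1 : TT G Q A n (II G Q A n (z : Ch G A n))
        = (∑ q : Q, qch G A Q q n) (z : Ch G A n) := by
      have := DFunLike.congr_fun (TT_II (G := G) (Q := Q) (A := A) n) (z : Ch G A n)
      simpa using this
    rw [h1, AddMonoidHom.finset_sum_apply]
    have h2 : ∀ q : Q, qch G A Q q n (z : Ch G A n) = (z : Ch G A n) := fun q => z.2.2 q
    rw [Finset.sum_congr rfl fun q _ => h2 q, Finset.sum_const, Finset.card_univ,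
      ← natCast_zsmul]
    exact U_card (Q := Q) f hf _
  have hright : ∀ y : Hn (KK G Q) A n, α (β y) = y := by
    intro y
    refine QuotientAddGroup.induction_on y fun z => ?_
    show α (β (QuotientAddGroup.mk z)) = QuotientAddGroup.mk z
    rw [show β (QuotientAddGroup.mk z) = QuotientAddGroup.mk (SB z) from rfl]
    rw [show α (QuotientAddGroup.mk (SB z)) = QuotientAddGroup.mk (SI (SB z)) from rfl]
    refine QuotientAddGroup.eq.mpr ?_
    rw [AddSubgroup.mem_addSubgroupOf]
    have hval : ((-(SI (SB z)) + z : cyc (KK G Q) A n) : Ch (KK G Q) A n)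
        = -(II G Q A n (UU G f n (TT G Q A n (z : Ch (KK G Q) A n))))
            + (z : Ch (KK G Q) A n) := rfl
    rw [hval]
    have hz : dd (KK G Q) A n (z : Ch (KK G Q) A n) = 0 := z.2
    have hkey := hom_key (G := G) (Q := Q) (A := A) n (z : Ch (KK G Q) A n) hz
    have hIT : II G Q A n (TT G Q A n (z : Ch (KK G Q) A n))
        = bd (KK G Q) A n (hh G Q A n (z : Ch (KK G Q) A n))
            + (Fintype.card Q : ℤ) • (z : Ch (KK G Q) A n) := by
      rw [hkey]; abel
    have hUI : II G Q A n (UU G f n (TT G Q A n (z : Ch (KK G Q) A n)))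
        = UU (KK G Q) f n (II G Q A n (TT G Q A n (z : Ch (KK G Q) A n))) := U_II f n _
    rw [hUI, hIT, map_add]
    have h3 := DFunLike.congr_fun (U_bd (X := KK G Q) f n) (hh G Q A n (z : Ch (KK G Q) A n))
    simp only [AddMonoidHom.comp_apply] at h3
    rw [← h3, U_card (Q := Q) f hf]
    refine ⟨-(UU (KK G Q) f (n + 1) (hh G Q A n (z : Ch (KK G Q) A n))), ?_⟩
    rw [map_neg]
    abel
  exact ⟨{ toFun := α, invFun := β, left_inv := hleft, right_inv := hright,
           map_add' := map_add α }⟩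

end

end IHAux

open InvariantHomology in
/-- If `Q` is finite with `|Q|` invertible in `A`, then
`H_q^Q(G, A) ≅ H_q(G ⋊ Q, A)`. -/
theorem invariant_homology_iso_semidirectProduct
    (G A Q : Type*) [Group G] [AddCommGroup A] [Group Q] [MulDistribMulAction Q G] [Fintype Q]
    (hA : Function.Bijective fun a : A => (Fintype.card Q : ℤ) • a) (q : ℕ) :
    Nonempty (HQ G A Q q ≃+ Hn (G ⋊[MulDistribMulAction.toMulAut Q G] Q) A q) := by
  exact IHAux.main G A Q hA q
end

section
/- Let Q be a finite group, G a Q-group, and A an abelian group with trivial G- and Q-actions such that |Q| is invertible in A. Then for every q ≥ 0 the Q-coinvariants of the group homology, H_q(G, A)_Q (which is the E²_{0q}-term of the Hochschild–Serre spectral sequence of the extension 1 → G → G ⋊ Q → Q → 1), is isomorphic to the homology of invariant group chains H_q^Q(G, A). -/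
open Finsupp

namespace InvariantHomology

set_option linter.unusedSectionVars false

noncomputable section Aux

variable {G A Q : Type*} [Group G] [AddCommGroup A] [Group Q] [MulDistribMulAction Q G]
  [Fintype Q]

/-- The inverse of multiplication by `|Q|` on `A`. -/
def dmap (hA : Function.Bijective fun a : A => (Fintype.card Q : ℤ) • a) : A →+ A :=
  (AddEquiv.ofBijective (AddMonoidHom.mk' (fun a : A => (Fintype.card Q : ℤ) • a)
    (fun a b => smul_add _ a b)) hA).symm.toAddMonoidHom

theorem dmap_card_smul (hA : Function.Bijective fun a : A => (Fintype.card Q : ℤ) • a) (a : A) :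
    dmap hA ((Fintype.card Q : ℤ) • a) = a :=
  (AddEquiv.ofBijective (AddMonoidHom.mk' (fun a : A => (Fintype.card Q : ℤ) • a)
    (fun a b => smul_add _ a b)) hA).symm_apply_apply a

variable (G) in
/-- Division by `|Q|` on chains. -/
def eCh (hA : Function.Bijective fun a : A => (Fintype.card Q : ℤ) • a) (n : ℕ) :
    Ch G A n →+ Ch G A n :=
  Finsupp.mapRange.addMonoidHom (dmap hA)

theorem eCh_single (hA : Function.Bijective fun a : A => (Fintype.card Q : ℤ) • a) {n : ℕ}
    (g : Fin n → G) (a : A) :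
    eCh G hA n (Finsupp.single g a) = Finsupp.single g (dmap hA a) := by
  classical
  ext g'
  simp [eCh, Finsupp.mapRange_apply, Finsupp.single_apply, apply_ite (dmap hA)]

theorem eCh_card_smul (hA : Function.Bijective fun a : A => (Fintype.card Q : ℤ) • a) {n : ℕ}
    (x : Ch G A n) : eCh G hA n ((Fintype.card Q : ℤ) • x) = x := by
  ext g
  simp only [eCh, Finsupp.mapRange.addMonoidHom_apply, Finsupp.mapRange_apply, Finsupp.smul_apply]
  exact dmap_card_smul hA _

theorem dd_eCh (hA : Function.Bijective fun a : A => (Fintype.card Q : ℤ) • a) (n : ℕ)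
    (x : Ch G A n) : dd G A n (eCh G hA n x) = eCh G hA (n - 1) (dd G A n x) := by
  cases n with
  | zero => simp [dd]
  | succ n =>
    show bd G A n (eCh G hA (n + 1) x) = eCh G hA n (bd G A n x)
    have h : (bd G A n).comp (eCh G hA (n + 1)) = (eCh G hA n).comp (bd G A n) := by
      refine Finsupp.addHom_ext fun g a => ?_
      simp only [AddMonoidHom.comp_apply, eCh_single, bd_single, map_add, map_sum, map_zsmul]
    exact DFunLike.congr_fun h x

theorem qch_eCh (hA : Function.Bijective fun a : A => (Fintype.card Q : ℤ) • a) (q : Q) (n : ℕ)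
    (x : Ch G A n) : qch G A Q q n (eCh G hA n x) = eCh G hA n (qch G A Q q n x) := by
  have h : (qch G A Q q n).comp (eCh G hA n) = (eCh G hA n).comp (qch G A Q q n) := by
    refine Finsupp.addHom_ext fun g a => ?_
    simp only [AddMonoidHom.comp_apply, eCh_single, qch_single]
  exact DFunLike.congr_fun h x

theorem qch_qch (q q' : Q) (n : ℕ) (x : Ch G A n) :
    qch G A Q q n (qch G A Q q' n x) = qch G A Q (q * q') n x :=
  (DFunLike.congr_fun (qch_mul G A Q q q' n) x).symm

variable (G A Q) in
/-- The sum over `Q` of the `Q`-action on chains. -/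
def sCh (n : ℕ) : Ch G A n →+ Ch G A n := ∑ q : Q, qch G A Q q n

theorem sCh_apply (n : ℕ) (x : Ch G A n) : sCh G A Q n x = ∑ q : Q, qch G A Q q n x := by
  simp [sCh]

theorem dd_sCh (n : ℕ) (x : Ch G A n) :
    dd G A n (sCh G A Q n x) = sCh G A Q (n - 1) (dd G A n x) := by
  rw [sCh_apply, map_sum, sCh_apply]
  exact Finset.sum_congr rfl fun q _ => DFunLike.congr_fun (dd_qch G A Q q n) x

theorem sCh_qch (q' : Q) (n : ℕ) (x : Ch G A n) :
    sCh G A Q n (qch G A Q q' n x) = sCh G A Q n x := by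
  rw [sCh_apply, sCh_apply]
  simp only [qch_qch]
  exact Fintype.sum_equiv (Equiv.mulRight q') _ _ fun q => rfl

theorem qch_sCh (q' : Q) (n : ℕ) (x : Ch G A n) :
    qch G A Q q' n (sCh G A Q n x) = sCh G A Q n x := by
  rw [sCh_apply, map_sum]
  simp only [qch_qch]
  exact Fintype.sum_equiv (Equiv.mulLeft q') _ _ fun q => rfl

theorem sCh_of_inv {n : ℕ} {x : Ch G A n} (hx : x ∈ invCh G A Q n) :
    sCh G A Q n x = (Fintype.card Q : ℤ) • x := by
  rw [sCh_apply]
  rw [Finset.sum_congr rfl fun q _ => hx q]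
  simp [Finset.card_univ, natCast_zsmul]

variable (G) in
/-- The averaging projector on chains. -/
def pCh (hA : Function.Bijective fun a : A => (Fintype.card Q : ℤ) • a) (n : ℕ) :
    Ch G A n →+ Ch G A n :=
  (eCh G hA n).comp (sCh G A Q n)

theorem dd_pCh (hA : Function.Bijective fun a : A => (Fintype.card Q : ℤ) • a) (n : ℕ)
    (x : Ch G A n) : dd G A n (pCh G hA n x) = pCh G hA (n - 1) (dd G A n x) := by
  show dd G A n (eCh G hA n (sCh G A Q n x)) = eCh G hA (n-1) (sCh G A Q (n-1) (dd G A n x))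
  rw [dd_eCh, dd_sCh]

theorem pCh_mem_inv (hA : Function.Bijective fun a : A => (Fintype.card Q : ℤ) • a) (n : ℕ)
    (x : Ch G A n) : pCh G hA n x ∈ invCh G A Q n := by
  intro q'
  show qch G A Q q' n (eCh G hA n (sCh G A Q n x)) = _
  rw [qch_eCh, qch_sCh]
  rfl

theorem pCh_of_inv (hA : Function.Bijective fun a : A => (Fintype.card Q : ℤ) • a) {n : ℕ}
    {x : Ch G A n} (hx : x ∈ invCh G A Q n) : pCh G hA n x = x := by
  show eCh G hA n (sCh G A Q n x) = x
  rw [sCh_of_inv hx, eCh_card_smul]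

variable (G A) in
/-- Chain maps commuting with the differential preserve cycles. -/
theorem cyc_mem_of_comm (f : ∀ n, Ch G A n →+ Ch G A n)
    (hf : ∀ n x, dd G A n (f n x) = f (n - 1) (dd G A n x)) (n : ℕ) (x : cyc G A n) :
    f n (x : Ch G A n) ∈ cyc G A n := by
  have hx : dd G A n (x : Ch G A n) = 0 := x.2
  show dd G A n (f n (x : Ch G A n)) = 0
  rw [hf, hx, map_zero]

variable (G A) in
/-- The map on homology induced by a family of chain maps commuting with the differential. -/
def hmapAux (f : ∀ n, Ch G A n →+ Ch G A n)
    (hf : ∀ n x, dd G A n (f n x) = f (n - 1) (dd G A n x)) (n : ℕ) :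
    Hn G A n →+ Hn G A n :=
  QuotientAddGroup.map _ _
    (((f n).comp (cyc G A n).subtype).codRestrict _ (cyc_mem_of_comm G A f hf n))
    (by
      intro x hx
      rw [AddSubgroup.mem_addSubgroupOf] at hx
      obtain ⟨y, hy⟩ := hx
      rw [AddSubgroup.mem_comap, AddSubgroup.mem_addSubgroupOf]
      refine ⟨f (n + 1) y, ?_⟩
      have h2 : bd G A n (f (n + 1) y) = f n (bd G A n y) := hf (n + 1) y
      show bd G A n (f (n + 1) y) = f n (x : Ch G A n)
      rw [h2, hy])

theorem hmapAux_mk (f : ∀ n, Ch G A n →+ Ch G A n)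
    (hf : ∀ n x, dd G A n (f n x) = f (n - 1) (dd G A n x)) (n : ℕ) (z : cyc G A n)
    (w : cyc G A n) (hw : f n (z : Ch G A n) = (w : Ch G A n)) :
    hmapAux G A f hf n (QuotientAddGroup.mk z) = QuotientAddGroup.mk w :=
  congrArg QuotientAddGroup.mk (Subtype.ext hw)

variable (G A Q) in
/-- The projector induced on homology. -/
def pHn (hA : Function.Bijective fun a : A => (Fintype.card Q : ℤ) • a) (n : ℕ) :
    Hn G A n →+ Hn G A n :=
  hmapAux G A (pCh G hA) (dd_pCh hA) n

variable (G A Q) in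
/-- The norm induced on homology. -/
def sHn (n : ℕ) : Hn G A n →+ Hn G A n :=
  hmapAux G A (sCh G A Q) dd_sCh n

variable (G A Q) in
/-- Division by `|Q|` induced on homology. -/
def eHn (hA : Function.Bijective fun a : A => (Fintype.card Q : ℤ) • a) (n : ℕ) :
    Hn G A n →+ Hn G A n :=
  hmapAux G A (eCh G hA) (dd_eCh hA) n

theorem sHn_mk (n : ℕ) (z w : cyc G A n) (hw : sCh G A Q n (z : Ch G A n) = (w : Ch G A n)) :
    sHn G A Q n (QuotientAddGroup.mk z) = QuotientAddGroup.mk w :=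
  hmapAux_mk (sCh G A Q) dd_sCh n z w hw

theorem eHn_mk (hA : Function.Bijective fun a : A => (Fintype.card Q : ℤ) • a) (n : ℕ)
    (z w : cyc G A n) (hw : eCh G hA n (z : Ch G A n) = (w : Ch G A n)) :
    eHn G A Q hA n (QuotientAddGroup.mk z) = QuotientAddGroup.mk w :=
  hmapAux_mk (eCh G hA) (dd_eCh hA) n z w hw

theorem pHn_mk (hA : Function.Bijective fun a : A => (Fintype.card Q : ℤ) • a) (n : ℕ)
    (z w : cyc G A n) (hw : pCh G hA n (z : Ch G A n) = (w : Ch G A n)) :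
    pHn G A Q hA n (QuotientAddGroup.mk z) = QuotientAddGroup.mk w :=
  hmapAux_mk (pCh G hA) (dd_pCh hA) n z w hw

theorem qHn_mk (q : Q) (n : ℕ) (z : cyc G A n) :
    qHn G A Q q n (QuotientAddGroup.mk z) = QuotientAddGroup.mk (qcyc G A Q q n z) := rfl

theorem mk_card_smul (n : ℕ) (z : cyc G A n) :
    ((Fintype.card Q : ℤ) • (QuotientAddGroup.mk z : Hn G A n))
      = QuotientAddGroup.mk ((Fintype.card Q : ℤ) • z) :=
  (map_zsmul (QuotientAddGroup.mk' ((bdry G A n).addSubgroupOf (cyc G A n))) _ _).symm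

theorem sHn_eq_sum (n : ℕ) (y : Hn G A n) :
    sHn G A Q n y = ∑ q : Q, qHn G A Q q n y := by
  induction y using QuotientAddGroup.induction_on with
  | H z =>
    have h1 : (∑ q : Q, qHn G A Q q n (QuotientAddGroup.mk z) : Hn G A n)
        = QuotientAddGroup.mk (∑ q : Q, qcyc G A Q q n z) := by
      simp only [qHn_mk]
      exact (map_sum (QuotientAddGroup.mk' ((bdry G A n).addSubgroupOf (cyc G A n))) _ _).symm
    rw [h1]
    refine sHn_mk n z _ ?_
    rw [sCh_apply, AddSubmonoidClass.coe_finset_sum]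
    rfl

theorem eHn_card_smul (hA : Function.Bijective fun a : A => (Fintype.card Q : ℤ) • a) (n : ℕ)
    (y : Hn G A n) : eHn G A Q hA n ((Fintype.card Q : ℤ) • y) = y := by
  induction y using QuotientAddGroup.induction_on with
  | H z =>
    show eHn G A Q hA n ((Fintype.card Q : ℤ) • (QuotientAddGroup.mk z : Hn G A n))
      = (QuotientAddGroup.mk z : Hn G A n)
    rw [mk_card_smul]
    refine eHn_mk hA n _ z ?_
    rw [AddSubgroup.coe_zsmul]
    exact eCh_card_smul hA _

theorem pHn_eq (hA : Function.Bijective fun a : A => (Fintype.card Q : ℤ) • a) (n : ℕ)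
    (y : Hn G A n) : pHn G A Q hA n y = eHn G A Q hA n (sHn G A Q n y) := by
  induction y using QuotientAddGroup.induction_on with
  | H z =>
    have hw1 : sCh G A Q n (z : Ch G A n) ∈ cyc G A n :=
      cyc_mem_of_comm G A (sCh G A Q) dd_sCh n z
    have h1 : sHn G A Q n (QuotientAddGroup.mk z)
        = QuotientAddGroup.mk (⟨_, hw1⟩ : cyc G A n) := sHn_mk n z _ rfl
    rw [h1]
    have h2 : eHn G A Q hA n (QuotientAddGroup.mk (⟨_, hw1⟩ : cyc G A n))
        = QuotientAddGroup.mk (⟨eCh G hA n (sCh G A Q n (z : Ch G A n)),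
            cyc_mem_of_comm G A (eCh G hA) (dd_eCh hA) n ⟨_, hw1⟩⟩ : cyc G A n) :=
      eHn_mk hA n _ _ rfl
    rw [h2]
    exact pHn_mk hA n z _ rfl

theorem pHn_qHn (hA : Function.Bijective fun a : A => (Fintype.card Q : ℤ) • a) (q' : Q) (n : ℕ)
    (y : Hn G A n) : pHn G A Q hA n (qHn G A Q q' n y) = pHn G A Q hA n y := by
  induction y using QuotientAddGroup.induction_on with
  | H z =>
    rw [qHn_mk]
    have h1 : pHn G A Q hA n (QuotientAddGroup.mk (qcyc G A Q q' n z))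
        = QuotientAddGroup.mk (⟨pCh G hA n (z : Ch G A n),
            cyc_mem_of_comm G A (pCh G hA) (dd_pCh hA) n z⟩ : cyc G A n) := by
      refine pHn_mk hA n _ _ ?_
      show eCh G hA n (sCh G A Q n (qch G A Q q' n (z : Ch G A n))) = _
      rw [sCh_qch]
      rfl
    rw [h1]
    exact (pHn_mk hA n z _ rfl).symm

theorem eHn_qHn (hA : Function.Bijective fun a : A => (Fintype.card Q : ℤ) • a) (q' : Q) (n : ℕ)
    (y : Hn G A n) : eHn G A Q hA n (qHn G A Q q' n y) = qHn G A Q q' n (eHn G A Q hA n y) := by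
  induction y using QuotientAddGroup.induction_on with
  | H z =>
    have hw1 : eCh G hA n (z : Ch G A n) ∈ cyc G A n :=
      cyc_mem_of_comm G A (eCh G hA) (dd_eCh hA) n z
    have h1 : eHn G A Q hA n (QuotientAddGroup.mk z)
        = QuotientAddGroup.mk (⟨_, hw1⟩ : cyc G A n) := eHn_mk hA n z _ rfl
    rw [qHn_mk, h1, qHn_mk]
    refine eHn_mk hA n _ _ ?_
    show eCh G hA n (qch G A Q q' n (z : Ch G A n)) = qch G A Q q' n (eCh G hA n (z : Ch G A n))
    rw [qch_eCh]

theorem gen_mem_coinvRel (q' : Q) (n : ℕ) (y : Hn G A n) :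
    y - qHn G A Q q' n y ∈ coinvRel G A Q n :=
  AddSubgroup.subset_closure ⟨q', y, rfl⟩

theorem card_smul_sub_sHn_mem (n : ℕ) (y : Hn G A n) :
    (Fintype.card Q : ℤ) • y - sHn G A Q n y ∈ coinvRel G A Q n := by
  rw [sHn_eq_sum]
  have h1 : ((Fintype.card Q : ℤ) • y : Hn G A n) = ∑ _q : Q, y := by
    simp [Finset.card_univ, natCast_zsmul]
  rw [h1, ← Finset.sum_sub_distrib]
  exact AddSubgroup.sum_mem _ fun q _ => gen_mem_coinvRel q n y

theorem eHn_coinvRel (hA : Function.Bijective fun a : A => (Fintype.card Q : ℤ) • a) (n : ℕ)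
    {y : Hn G A n} (hy : y ∈ coinvRel G A Q n) :
    eHn G A Q hA n y ∈ coinvRel G A Q n := by
  revert y
  have h : coinvRel G A Q n ≤ (coinvRel G A Q n).comap (eHn G A Q hA n) := by
    rw [coinvRel, AddSubgroup.closure_le]
    rintro x ⟨q', y, rfl⟩
    rw [SetLike.mem_coe, AddSubgroup.mem_comap, map_sub, eHn_qHn]
    exact gen_mem_coinvRel q' n _
  exact fun y hy => h hy

theorem pHn_coinvRel_zero (hA : Function.Bijective fun a : A => (Fintype.card Q : ℤ) • a) (n : ℕ)
    {y : Hn G A n} (hy : y ∈ coinvRel G A Q n) : pHn G A Q hA n y = 0 := by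
  revert y
  have h : coinvRel G A Q n ≤ (pHn G A Q hA n).ker := by
    rw [coinvRel, AddSubgroup.closure_le]
    rintro x ⟨q', y, rfl⟩
    rw [SetLike.mem_coe, AddMonoidHom.mem_ker, map_sub, pHn_qHn, sub_self]
  exact fun y hy => h hy

theorem sub_pHn_mem (hA : Function.Bijective fun a : A => (Fintype.card Q : ℤ) • a) (n : ℕ)
    (y : Hn G A n) : y - pHn G A Q hA n y ∈ coinvRel G A Q n := by
  have h := eHn_coinvRel hA n (card_smul_sub_sHn_mem n y)
  rw [map_sub, eHn_card_smul, ← pHn_eq] at h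
  exact h

end Aux

end InvariantHomology

open InvariantHomology in
/-- If `|Q|` is invertible in `A`, the coinvariants `H_q(G, A)_Q`
(the `E²₀q` term of the Hochschild–Serre spectral sequence of
`1 → G → G ⋊ Q → Q → 1`) are isomorphic to `H_q^Q(G, A)`. -/
theorem coinvariants_iso_invariant_homology
    (G A Q : Type*) [Group G] [AddCommGroup A] [Group Q] [MulDistribMulAction Q G] [Fintype Q]
    (hA : Function.Bijective fun a : A => (Fintype.card Q : ℤ) • a) (q : ℕ) :
    Nonempty (HnCoinv G A Q q ≃+ HQ G A Q q) := by
  classical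
  set n := q with hn
  -- the natural map `HQ → HnCoinv`
  set Psi : HQ G A Q n →+ HnCoinv G A Q n :=
    (QuotientAddGroup.mk' (coinvRel G A Q n)).comp (iStar G A Q n) with hPsi
  have hinj : Function.Injective Psi := by
    rw [injective_iff_map_eq_zero]
    intro x hx
    induction x using QuotientAddGroup.induction_on with
    | H z =>
      -- `z : cycQ G A Q n`; hypothesis: its homology class is in `coinvRel`
      have hz1 : (z : Ch G A n) ∈ cyc G A n := z.2.1
      have hz2 : (z : Ch G A n) ∈ invCh G A Q n := z.2.2
      have hmem : (QuotientAddGroup.mk (⟨(z : Ch G A n), hz1⟩ : cyc G A n) : Hn G A n)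
          ∈ coinvRel G A Q n := by
        have : Psi (QuotientAddGroup.mk z) = QuotientAddGroup.mk
            (QuotientAddGroup.mk (⟨(z : Ch G A n), hz1⟩ : cyc G A n) : Hn G A n) := rfl
        rw [this] at hx
        haveI := AddSubgroup.normal_of_isAddCommutative (coinvRel G A Q n)
        exact (QuotientAddGroup.eq_zero_iff (N := coinvRel G A Q n) _).mp hx
      have hp0 := pHn_coinvRel_zero hA n hmem
      have hfix : pCh G hA n (z : Ch G A n) = (z : Ch G A n) := pCh_of_inv hA hz2
      have hp1 : pHn G A Q hA n (QuotientAddGroup.mk (⟨(z : Ch G A n), hz1⟩ : cyc G A n))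
          = QuotientAddGroup.mk (⟨(z : Ch G A n), hz1⟩ : cyc G A n) :=
        pHn_mk hA n _ _ hfix
      rw [hp1] at hp0
      have hbd : (⟨(z : Ch G A n), hz1⟩ : cyc G A n)
          ∈ (bdry G A n).addSubgroupOf (cyc G A n) :=
        (QuotientAddGroup.eq_zero_iff _).mp hp0
      rw [AddSubgroup.mem_addSubgroupOf] at hbd
      obtain ⟨y, hy⟩ := hbd
      -- `z = bd y`; replace `y` by its average to get an invariant preimage
      have hzQ : (z : Ch G A n) ∈ bdryQ G A Q n := by
        refine ⟨pCh G hA (n + 1) y, pCh_mem_inv hA (n + 1) y, ?_⟩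
        have h5 : bd G A n (pCh G hA (n + 1) y) = pCh G hA n (bd G A n y) :=
          dd_pCh hA (n + 1) y
        rw [h5, hy]
        exact hfix
      refine (QuotientAddGroup.eq_zero_iff (N := (bdryQ G A Q n).addSubgroupOf (cycQ G A Q n)) z).mpr ?_
      rw [AddSubgroup.mem_addSubgroupOf]
      exact hzQ
  have hsurj : Function.Surjective Psi := by
    intro y
    induction y using QuotientAddGroup.induction_on with
    | H w =>
      induction w using QuotientAddGroup.induction_on with
      | H z =>
        -- `z : cyc G A n`; take its average `pCh z`, an invariant cycle
        have hc : pCh G hA n (z : Ch G A n) ∈ cyc G A n := by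
          show dd G A n (pCh G hA n (z : Ch G A n)) = 0
          rw [dd_pCh]
          have hz : dd G A n (z : Ch G A n) = 0 := z.2
          rw [hz, map_zero]
        refine ⟨QuotientAddGroup.mk (⟨pCh G hA n (z : Ch G A n),
          hc, pCh_mem_inv hA n _⟩ : cycQ G A Q n), ?_⟩
        have h1 : Psi (QuotientAddGroup.mk (⟨pCh G hA n (z : Ch G A n),
            hc, pCh_mem_inv hA n _⟩ : cycQ G A Q n))
            = QuotientAddGroup.mk (QuotientAddGroup.mk
              (⟨pCh G hA n (z : Ch G A n), hc⟩ : cyc G A n) : Hn G A n) := rfl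
        rw [h1]
        have h2 : (QuotientAddGroup.mk (⟨pCh G hA n (z : Ch G A n), hc⟩ : cyc G A n) : Hn G A n)
            = pHn G A Q hA n (QuotientAddGroup.mk z) :=
          (pHn_mk hA n z _ rfl).symm
        have h3 := sub_pHn_mem hA n (QuotientAddGroup.mk z : Hn G A n)
        have h5 : -(QuotientAddGroup.mk (⟨pCh G hA n (z : Ch G A n), hc⟩ : cyc G A n) : Hn G A n)
            + (QuotientAddGroup.mk z : Hn G A n) ∈ coinvRel G A Q n := by
          rw [h2]
          have h6 : ∀ a b : Hn G A n, -a + b = b - a := fun a b => neg_add_eq_sub a b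
          exact (congrArg (· ∈ coinvRel G A Q n) (h6 _ _)).mpr h3
        exact (QuotientAddGroup.eq).mpr h5
  exact ⟨(AddEquiv.ofBijective Psi ⟨hinj, hsurj⟩).symm⟩
end

section
/- Let Q be a finite group and G a Q-group. There exists a group homomorphism ψ : (G//Q)_ab → H_1^Q(G, ℤ) from the abelianization of the orbit group to the first homology group of invariant group chains such that for every g ∈ G, ψ applied to the image of g in (G//Q)_ab equals the class of the invariant 1-chain Σ_{q∈Q} [q(g)] in H_1^Q(G, ℤ); that is, ψ commutes with the norm map N : G → H_1^Q(G, ℤ), g ↦ [Σ_{q∈Q} q(g)]. -/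
open Finsupp

namespace OrbitGroup

open SemidirectProduct

variable (G Q : Type*) [Group G] [Group Q] [MulDistribMulAction Q G]

/-- The action of `Q` on `G`, as a homomorphism `Q →* Aut(G)`. -/
abbrev phi : Q →* MulAut G := MulDistribMulAction.toMulAut Q G

/-- The set of commutators `[g, q] = g · (q g⁻¹ q⁻¹)` inside `G ⋊ Q`. -/
def commSet : Set (G ⋊[phi G Q] Q) :=
  {z | ∃ (g : G) (q : Q), z = inl g * inr q * (inl g)⁻¹ * (inr q)⁻¹}

/-- The normal closure `[G,Q]^{G ⋊ Q}` of the commutator subgroup `[G, Q]` in `G ⋊ Q`. -/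
def ncl : Subgroup (G ⋊[phi G Q] Q) := Subgroup.normalClosure (commSet G Q)

instance : (ncl G Q).Normal := Subgroup.normalClosure_normal

/-- The composite `G ↪ G ⋊ Q → (G ⋊ Q)/[G,Q]^{G ⋊ Q}`. -/
def pFull : G →* (G ⋊[phi G Q] Q) ⧸ ncl G Q :=
  (QuotientGroup.mk' (ncl G Q)).comp inl

/-- The orbit group `G⫽Q`: the image of `G` in `(G ⋊ Q)/[G,Q]^{G ⋊ Q}`. -/
def Orb : Subgroup ((G ⋊[phi G Q] Q) ⧸ ncl G Q) := (pFull G Q).range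

/-- The canonical map `p : G → G⫽Q`. -/
def pmap (g : G) : Orb G Q := ⟨pFull G Q g, ⟨g, rfl⟩⟩

end OrbitGroup


section AuxProof

open InvariantHomology OrbitGroup SemidirectProduct Finsupp

noncomputable section

variable (G : Type*) [Group G] (Q : Type*) [Group Q] [MulDistribMulAction Q G] [Fintype Q]

theorem aux_bd_single2 (x y : G) :
    bd G ℤ 1 (Finsupp.single ![x, y] (1 : ℤ)) =
      Finsupp.single (fun _ : Fin 1 => y) 1 - Finsupp.single (fun _ : Fin 1 => x * y) 1
        + Finsupp.single (fun _ : Fin 1 => x) 1 := by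
  have ht : Fin.tail ![x, y] = fun _ : Fin 1 => y := funext fun j => by fin_cases j; rfl
  have hi : Fin.init ![x, y] = fun _ : Fin 1 => x := funext fun j => by fin_cases j; rfl
  have hf : fm ![x, y] 0 = fun _ : Fin 1 => x * y := funext fun j => by
    fin_cases j; rfl
  rw [bd_single, Fin.sum_univ_one, ht, hi, hf]
  norm_num
  abel

/-- The invariant 2-chain `∑_q [q•g | q•h]`. -/
def chn2 (g h : G) : Ch G ℤ 2 :=
  ∑ q : Q, Finsupp.single (q • ![g, h]) (1 : ℤ)

theorem chn2_mem_invCh (g h : G) : chn2 G Q g h ∈ invCh G ℤ Q 2 := by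
  intro q'
  rw [chn2, map_sum]
  simp only [qch_single]
  refine Fintype.sum_equiv (Equiv.mulLeft q') _ _ fun q => ?_
  congr 1
  show q' • (q • ![g, h]) = (q' * q) • ![g, h]
  rw [mul_smul]

theorem bd_chn2 (g h : G) :
    bd G ℤ 1 (chn2 G Q g h) = ncyc G Q h - ncyc G Q (g * h) + ncyc G Q g := by
  rw [chn2, map_sum, ncyc, ncyc, ncyc, ← Finset.sum_sub_distrib, ← Finset.sum_add_distrib]
  refine Finset.sum_congr rfl fun q _ => ?_
  have hp : q • ![g, h] = ![q • g, q • h] := funext fun j => by fin_cases j <;> rfl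
  rw [hp, aux_bd_single2, smul_mul']

theorem NQ_mul (g h : G) : NQ G Q (g * h) = NQ G Q g + NQ G Q h := by
  symm
  rw [NQ, NQ, NQ]
  show (QuotientAddGroup.mk ⟨ncyc G Q g, ncyc_mem G Q g⟩ + QuotientAddGroup.mk ⟨ncyc G Q h, ncyc_mem G Q h⟩ :
      cycQ G ℤ Q 1 ⧸ ((bdryQ G ℤ Q 1).addSubgroupOf (cycQ G ℤ Q 1))) =
    QuotientAddGroup.mk ⟨ncyc G Q (g * h), ncyc_mem G Q (g * h)⟩
  rw [← QuotientAddGroup.mk_add, QuotientAddGroup.eq,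
    AddSubgroup.mem_addSubgroupOf]
  refine ⟨-(chn2 G Q g h), (invCh G ℤ Q 2).neg_mem (chn2_mem_invCh G Q g h), ?_⟩
  rw [map_neg, bd_chn2]
  show _ = ((-(⟨ncyc G Q g, _⟩ + ⟨ncyc G Q h, _⟩) + ⟨ncyc G Q (g * h), _⟩ :
      cycQ G ℤ Q 1) : Ch G ℤ 1)
  push_cast
  abel

theorem ncyc_smul (q₀ : Q) (g : G) : ncyc G Q (q₀ • g) = ncyc G Q g := by
  rw [ncyc, ncyc]
  refine Fintype.sum_equiv (Equiv.mulRight q₀) _ _ fun q => ?_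
  congr 1
  funext j
  show q • q₀ • g = (q * q₀) • g
  rw [mul_smul]

theorem NQ_smul (q₀ : Q) (g : G) : NQ G Q (q₀ • g) = NQ G Q g :=
  congrArg QuotientAddGroup.mk (Subtype.ext (ncyc_smul G Q q₀ g))

theorem NQ_one : NQ G Q (1 : G) = 0 := by
  have h := NQ_mul G Q 1 1
  rw [mul_one] at h
  exact left_eq_add.mp h

/-- The homomorphism `G ⋊ Q →* Multiplicative H₁^Q(G, ℤ)`, `(g, q) ↦ N(g)`. -/
def fsd : (G ⋊[phi G Q] Q) →* Multiplicative (HQ G ℤ Q 1) where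
  toFun z := Multiplicative.ofAdd (NQ G Q z.left)
  map_one' := by
    show Multiplicative.ofAdd (NQ G Q (1 : G)) = 1
    rw [NQ_one]
    rfl
  map_mul' a b := by
    show Multiplicative.ofAdd (NQ G Q (a.left * a.right • b.left)) = _
    rw [NQ_mul, NQ_smul]
    rfl

end

end AuxProof

open InvariantHomology OrbitGroup in
/-- There is a homomorphism `(G⫽Q)_ab → H₁^Q(G, ℤ)` from the
abelianization of the orbit group to the first homology of invariant group chains,
commuting with the norm map `N : G → H₁^Q(G, ℤ)`, `g ↦ [∑_{q ∈ Q} [q • g]]`. -/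
theorem orbitGroup_abelianization_to_first_invariant_homology
    (G Q : Type*) [Group G] [Group Q] [MulDistribMulAction Q G] [Fintype Q] :
    ∃ ψ : Additive (Abelianization (Orb G Q)) →+ HQ G ℤ Q 1,
      ∀ g : G, ψ (Additive.ofMul (Abelianization.of (pmap G Q g))) = NQ G Q g := by
  classical
  -- the homomorphism on the semidirect product
  set f := fsd G Q with hf
  have h1 : ∀ q : Q, f (SemidirectProduct.inr q) = 1 := fun q => by
    show Multiplicative.ofAdd (NQ G Q (1 : G)) = 1
    rw [NQ_one]; rfl
  have h2 : ∀ g : G, f (SemidirectProduct.inl g) = Multiplicative.ofAdd (NQ G Q g) := fun g => rfl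
  have hcomm : commSet G Q ⊆ (f.ker : Set _) := by
    rintro z ⟨g, q, rfl⟩
    have : f (SemidirectProduct.inl g * SemidirectProduct.inr q * (SemidirectProduct.inl g)⁻¹ * (SemidirectProduct.inr q)⁻¹) = 1 := by
      rw [map_mul, map_mul, map_mul, map_inv, map_inv, h1, h2]
      group
    exact this
  have hker : ncl G Q ≤ f.ker := Subgroup.normalClosure_le_normal hcomm
  let fbar : ((G ⋊[phi G Q] Q) ⧸ ncl G Q) →* Multiplicative (HQ G ℤ Q 1) :=
    QuotientGroup.lift (ncl G Q) f hker
  let χ : Orb G Q →* Multiplicative (HQ G ℤ Q 1) := fbar.comp (Orb G Q).subtype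
  let Φ : Abelianization (Orb G Q) →* Multiplicative (HQ G ℤ Q 1) := Abelianization.lift χ
  refine ⟨MonoidHom.toAdditiveLeft Φ, fun g => ?_⟩
  show Multiplicative.toAdd (Φ (Abelianization.of (pmap G Q g))) = NQ G Q g
  rw [Abelianization.lift_apply_of]
  show Multiplicative.toAdd (fbar (pFull G Q g)) = NQ G Q g
  rfl
end

section
/- Let G be a Q-group and let M be a Q-G module, regarded as a module over the group ring ℤ(G ⋊ Q). Then M is a free ℤ(G ⋊ Q)-module if and only if M admits a ℤG-basis on which Q acts freely; that is, if and only if there exists a subset B ⊆ M which is a basis of M as a ℤG-module, which is permuted by the action of Q, and such that the Q-action on B is free. -/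
universe u

namespace S14

section General

variable {ι κ : Type*} {S R M : Type*} [Ring S] [Ring R] [AddCommGroup M]
  [Module R M] [Module S R] [Module S M] (f : S →+* R)
  (hsr : ∀ (s : S) (r : R), s • r = f s * r)
  (hsm : ∀ (s : S) (m : M), s • m = f s • m)
  (c : Module.Basis κ S R) (t : ι → M)

/-- scalar multiplication by `t i` as an `S`-linear map `R →ₗ[S] M`. -/
def mu (i : ι) : R →ₗ[S] M where
  toFun r := r • t i
  map_add' a b := add_smul a b (t i)
  map_smul' s r := by
    simp only [RingHom.id_apply, hsr, hsm, mul_smul]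

lemma finsuppProdLEquiv_symm_single (x : ι) (w : κ →₀ S) :
    (Finsupp.finsuppProdLEquiv S).symm (Finsupp.single x w)
      = w.embDomain ⟨fun k => (x, k), fun a b h => (Prod.mk.injEq _ _ _ _ ▸ h).2⟩ := by
  ext p
  obtain ⟨x', k⟩ := p
  show (Finsupp.single x w : ι →₀ κ →₀ S) x' k = _
  by_cases h : x' = x
  · subst h
    rw [Finsupp.single_eq_same]
    exact (Finsupp.embDomain_apply_self ⟨fun k => (x', k), fun a b h =>
      (Prod.mk.injEq _ _ _ _ ▸ h).2⟩ w k).symm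
  · rw [Finsupp.single_eq_of_ne' (Ne.symm h)]
    rw [Finsupp.embDomain_notin_range]
    · rfl
    · rintro ⟨k', hk'⟩
      exact h (congrArg Prod.fst hk').symm

include f hsr hsm in
lemma key (l : ι →₀ R) :
    Finsupp.linearCombination S (fun p : ι × κ => c p.2 • t p.1)
      ((Finsupp.finsuppProdLEquiv S).symm (l.mapRange c.repr (map_zero _)))
      = Finsupp.linearCombination R t l := by
  induction l using Finsupp.induction with
  | zero => simp
  | single_add x r l hx hr ih =>
    have hsum : (Finsupp.finsuppProdLEquiv S).symm
        (Finsupp.mapRange ⇑c.repr (map_zero _) ((Finsupp.single x r) + l))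
        = (Finsupp.finsuppProdLEquiv S).symm (Finsupp.single x (c.repr r))
          + (Finsupp.finsuppProdLEquiv S).symm (Finsupp.mapRange ⇑c.repr (map_zero _) l) := by
      rw [Finsupp.mapRange_add (by exact map_add _), Finsupp.mapRange_single, map_add]
    rw [hsum, map_add, map_add, Finsupp.linearCombination_single, ih]
    congr 1
    rw [finsuppProdLEquiv_symm_single, Finsupp.linearCombination_embDomain]
    have h2 : ((fun p : ι × κ => c p.2 • t p.1) ∘ ⇑(⟨fun k => (x, k), fun a b h =>
        (Prod.mk.injEq _ _ _ _ ▸ h).2⟩ : κ ↪ ι × κ)) = fun k => (mu f hsr hsm t x) (c k) := rfl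
    rw [h2, show (fun k => (mu f hsr hsm t x) (c k)) = ⇑(mu f hsr hsm t x) ∘ c from rfl,
      ← Finsupp.apply_linearCombination, Module.Basis.linearCombination_repr]
    rfl

include hsr hsm in
lemma indep_transfer (ht : LinearIndependent R t) :
    LinearIndependent S (fun p : ι × κ => c p.2 • t p.1) := by
  rw [linearIndependent_iff] at ht ⊢
  intro L hL
  set l : ι →₀ R := ((Finsupp.finsuppProdLEquiv S) L).mapRange c.repr.symm (map_zero _) with hl
  have hml : l.mapRange c.repr (map_zero _) = (Finsupp.finsuppProdLEquiv S) L := by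
    ext x k
    simp [hl]
  have := key f hsr hsm c t l
  rw [hml, LinearEquiv.symm_apply_apply, hL] at this
  have hl0 : l = 0 := ht l this.symm
  have : (Finsupp.finsuppProdLEquiv S) L = 0 := by
    rw [← hml, hl0]
    ext x k
    simp
  simpa using congrArg (Finsupp.finsuppProdLEquiv S).symm this

include hsr hsm in
lemma indep_converse (hv : LinearIndependent S (fun p : ι × κ => c p.2 • t p.1)) :
    LinearIndependent R t := by
  rw [linearIndependent_iff] at hv ⊢
  intro l hl
  have := key f hsr hsm c t l
  rw [hl] at this
  have h0 := hv _ this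
  ext x
  have : (l.mapRange c.repr (map_zero _)) x = 0 := by
    have := congrArg (Finsupp.finsuppProdLEquiv S) h0
    rw [LinearEquiv.apply_symm_apply, map_zero] at this
    rw [this]; rfl
  have : c.repr (l x) = 0 := this
  simpa using congrArg c.repr.symm this

include hsr hsm in
lemma smul_mem_span (i : ι) (r : R) :
    r • t i ∈ Submodule.span S (Set.range (fun p : ι × κ => c p.2 • t p.1)) := by
  set N := Submodule.span S (Set.range (fun p : ι × κ => c p.2 • t p.1)) with hN
  let P : Submodule S R :=
    { carrier := {r : R | r • t i ∈ N}
      add_mem' := by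
        intro a b ha hb
        simp only [Set.mem_setOf_eq, add_smul] at *
        exact N.add_mem ha hb
      zero_mem' := by simp only [Set.mem_setOf_eq, zero_smul]; exact N.zero_mem
      smul_mem' := by
        intro s r hr
        simp only [Set.mem_setOf_eq] at *
        rw [hsr, mul_smul, ← hsm]
        exact N.smul_mem s hr }
  have hc : ∀ k, c k ∈ P := by
    intro k
    show c k • t i ∈ N
    exact Submodule.subset_span ⟨(i, k), rfl⟩
  have : r ∈ P := by
    have hr : r ∈ Submodule.span S (Set.range c) := by rw [Module.Basis.span_eq]; trivial
    exact Submodule.span_le.2 (Set.range_subset_iff.2 hc) hr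
  exact this

include hsr hsm in
lemma span_transfer (ht : Submodule.span R (Set.range t) = ⊤) :
    Submodule.span S (Set.range (fun p : ι × κ => c p.2 • t p.1)) = ⊤ := by
  set N := Submodule.span S (Set.range (fun p : ι × κ => c p.2 • t p.1)) with hN
  have hclosed : ∀ m ∈ N, ∀ r : R, r • m ∈ N := by
    intro m hm
    refine Submodule.span_induction ?_ ?_ ?_ ?_ hm
    · rintro _ ⟨⟨x, k⟩, rfl⟩ r
      rw [smul_smul]
      exact smul_mem_span f hsr hsm c t x _
    · intro r; rw [smul_zero]; exact N.zero_mem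
    · intro a b _ _ ha hb r
      rw [smul_add]; exact N.add_mem (ha r) (hb r)
    · intro s y _ hy r
      rw [hsm, smul_smul]
      exact hy _
  rw [eq_top_iff]
  intro m _
  have hm : m ∈ Submodule.span R (Set.range t) := ht ▸ Submodule.mem_top
  refine Submodule.span_induction ?_ ?_ ?_ ?_ hm
  · rintro _ ⟨i, rfl⟩
    simpa using smul_mem_span f hsr hsm c t i 1
  · exact N.zero_mem
  · intro a b _ _ ha hb; exact N.add_mem ha hb
  · intro r y _ hy; exact hclosed y hy r

include hsr hsm in
omit hsr in
lemma span_converse (hv : Submodule.span S (Set.range (fun p : ι × κ => c p.2 • t p.1)) = ⊤) :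
    Submodule.span R (Set.range t) = ⊤ := by
  set N := Submodule.span R (Set.range t) with hN
  rw [eq_top_iff]
  intro m _
  have hm : m ∈ Submodule.span S (Set.range (fun p : ι × κ => c p.2 • t p.1)) :=
    hv ▸ Submodule.mem_top
  refine Submodule.span_induction ?_ ?_ ?_ ?_ hm
  · rintro _ ⟨⟨x, k⟩, rfl⟩
    exact N.smul_mem _ (Submodule.subset_span ⟨x, rfl⟩)
  · exact N.zero_mem
  · intro a b _ _ ha hb; exact N.add_mem ha hb
  · intro s y _ hy
    rw [hsm]
    exact N.smul_mem _ hy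

end General
end S14


namespace S14T

lemma finsuppProdLEquiv_single {α β M N : Type*} [Semiring N] [AddCommMonoid M] [Module N M]
    (a : α) (b : β) (m : M) :
    Finsupp.finsuppProdLEquiv N (Finsupp.single (a, b) m) = Finsupp.single a (Finsupp.single b m) := by
  classical
  ext x y
  show (Finsupp.single (a, b) m : α × β →₀ M) (x, y) = _
  by_cases h : x = a
  · subst h
    by_cases h2 : y = b
    · subst h2; rw [Finsupp.single_eq_same, Finsupp.single_eq_same, Finsupp.single_eq_same]
    · rw [Finsupp.single_eq_same, Finsupp.single_eq_of_ne' (Ne.symm h2),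
        Finsupp.single_eq_of_ne' (by simpa [Prod.ext_iff] using Ne.symm h2)]
  · rw [Finsupp.single_eq_of_ne' (Ne.symm h), Finsupp.single_eq_of_ne'
      (by simp [Prod.ext_iff]; exact fun hh => absurd hh.symm h)]
    rfl

variable {G Q : Type u} [Group G] [Group Q] (φ : Q →* MulAut G)

local notation "S" => MonoidAlgebra ℤ G
local notation "R" => MonoidAlgebra ℤ (G ⋊[φ] Q)

noncomputable def e1 : (G ⋊[φ] Q) ≃ Q × G where
  toFun x := (x.right, x.left)
  invFun p := ⟨p.2, p.1⟩
  left_inv _ := rfl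
  right_inv _ := rfl

noncomputable def E : R ≃+ (Q →₀ S) :=
  MonoidAlgebra.coeffAddEquiv.trans ((Finsupp.domCongr (e1 φ)).trans
    ((Finsupp.finsuppProdLEquiv ℤ).toAddEquiv.trans
      (Finsupp.mapRange.addEquiv MonoidAlgebra.coeffAddEquiv.symm)))

lemma E_single (g : G) (q : Q) (z : ℤ) :
    E φ (MonoidAlgebra.single (⟨g, q⟩ : G ⋊[φ] Q) z) = Finsupp.single q (MonoidAlgebra.single g z) := by
  have h1 : Finsupp.domCongr (M := ℤ) (e1 φ) (Finsupp.single (⟨g, q⟩ : G ⋊[φ] Q) z)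
      = Finsupp.single ((q, g) : Q × G) z := by
    rw [Finsupp.domCongr_apply]
    exact Finsupp.equivMapDomain_single _ _ _
  have h0 : E φ (MonoidAlgebra.single (⟨g, q⟩ : G ⋊[φ] Q) z)
      = Finsupp.mapRange.addEquiv MonoidAlgebra.coeffAddEquiv.symm
        (Finsupp.finsuppProdLEquiv (M := ℤ) ℤ
        (Finsupp.domCongr (e1 φ) (Finsupp.single (⟨g, q⟩ : G ⋊[φ] Q) z))) := rfl
  rw [h0, h1, finsuppProdLEquiv_single]
  simp


noncomputable def fhom : MonoidAlgebra ℤ G →+* R :=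
  MonoidAlgebra.mapDomainRingHom ℤ (SemidirectProduct.inl : G →* G ⋊[φ] Q)

lemma fhom_single (g : G) (a : ℤ) :
    fhom φ (MonoidAlgebra.single g a)
      = MonoidAlgebra.single (SemidirectProduct.inl g : G ⋊[φ] Q) a := by
  simp [fhom, MonoidAlgebra.mapDomainRingHom, Finsupp.mapDomain_single]

lemma mul_single_single (g g' : G) (q : Q) (a b : ℤ) :
    MonoidAlgebra.single (SemidirectProduct.inl g : G ⋊[φ] Q) a
        * MonoidAlgebra.single (⟨g', q⟩ : G ⋊[φ] Q) b
      = MonoidAlgebra.single (⟨g * g', q⟩ : G ⋊[φ] Q) (a * b) := by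
  rw [MonoidAlgebra.single_mul_single]
  congr 1
  ext
  · rw [SemidirectProduct.mul_left]
    simp
  · rw [SemidirectProduct.mul_right]
    simp

lemma E_smul :
    letI : Module (MonoidAlgebra ℤ G) R := Module.compHom _ (fhom φ)
    ∀ (s : MonoidAlgebra ℤ G) (r : R), E φ (s • r) = s • E φ r := by
  letI : Module (MonoidAlgebra ℤ G) R := Module.compHom _ (fhom φ)
  have hsr : ∀ (s : MonoidAlgebra ℤ G) (r : R), s • r = fhom φ s * r := fun _ _ => rfl
  intro s r
  induction r using MonoidAlgebra.induction_on with
  | add a b iha ihb => rw [smul_add, map_add, map_add, smul_add, iha, ihb]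
  | smul z a ih =>
    rw [smul_comm, map_zsmul, map_zsmul, ih, smul_comm]
  | of x =>
    induction s using MonoidAlgebra.induction_on with
    | add a b iha ihb => rw [add_smul, map_add, iha, ihb, add_smul]
    | smul z a ih =>
      have h1 : (z • a) • (MonoidAlgebra.of ℤ (G ⋊[φ] Q) x) = z • (a • MonoidAlgebra.of ℤ (G ⋊[φ] Q) x) := by
        rw [hsr, hsr, map_zsmul, smul_mul_assoc]
      rw [h1, map_zsmul, ih, smul_assoc]
    | of g =>
      obtain ⟨g', q⟩ := x
      have h2 : MonoidAlgebra.of ℤ G g = MonoidAlgebra.single g (1 : ℤ) := rfl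
      have h3 : MonoidAlgebra.of ℤ (G ⋊[φ] Q) (⟨g', q⟩ : G ⋊[φ] Q)
          = MonoidAlgebra.single (⟨g', q⟩ : G ⋊[φ] Q) (1 : ℤ) := rfl
      rw [h2, h3, hsr, fhom_single, mul_single_single, E_single, E_single, Finsupp.smul_single]
      congr 1
      rw [smul_eq_mul, MonoidAlgebra.single_mul_single]

noncomputable def cBasis :
    letI : Module (MonoidAlgebra ℤ G) R := Module.compHom _ (fhom φ)
    Module.Basis Q (MonoidAlgebra ℤ G) R := by
  letI : Module (MonoidAlgebra ℤ G) R := Module.compHom _ (fhom φ)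
  refine Module.Basis.ofRepr (LinearEquiv.mk ⟨⟨(E φ).toFun, (E φ).map_add⟩, E_smul φ⟩
    (E φ).invFun (E φ).left_inv (E φ).right_inv)

lemma cBasis_apply (q : Q) :
    letI : Module (MonoidAlgebra ℤ G) R := Module.compHom _ (fhom φ)
    cBasis φ q = MonoidAlgebra.single (SemidirectProduct.inr q : G ⋊[φ] Q) (1 : ℤ) := by
  letI : Module (MonoidAlgebra ℤ G) R := Module.compHom _ (fhom φ)
  have h1 : E φ (MonoidAlgebra.single (SemidirectProduct.inr q : G ⋊[φ] Q) (1 : ℤ))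
      = Finsupp.single q (1 : MonoidAlgebra ℤ G) := by
    have : (SemidirectProduct.inr q : G ⋊[φ] Q) = ⟨1, q⟩ := rfl
    rw [this, E_single, MonoidAlgebra.one_def]
  have : cBasis φ q = (cBasis φ).repr.symm (Finsupp.single q 1) := by
    rw [Module.Basis.repr_symm_single_one]
  rw [this]
  apply_fun (cBasis φ).repr
  rw [LinearEquiv.apply_symm_apply]
  exact h1.symm

end S14T


/-- A `Q`-`G` module `M` (i.e. a module over `ℤ(G ⋊ Q)`) is free if and
only if it admits a `ℤG`-basis which is permuted by `Q` and on which `Q` acts freely. -/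
theorem free_module_iff_exists_basis_with_free_action
    (G Q : Type u) [Group G] [Group Q] (φ : Q →* MulAut G)
    (M : Type u) [AddCommGroup M] [Module (MonoidAlgebra ℤ (G ⋊[φ] Q)) M] :
    Module.Free (MonoidAlgebra ℤ (G ⋊[φ] Q)) M ↔
      ∃ B : Set M,
        (letI : Module (MonoidAlgebra ℤ G) M :=
            Module.compHom M
              (MonoidAlgebra.mapDomainRingHom ℤ (SemidirectProduct.inl : G →* G ⋊[φ] Q));
          LinearIndependent (MonoidAlgebra ℤ G) ((↑) : B → M) ∧
            Submodule.span (MonoidAlgebra ℤ G) B = ⊤)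
        ∧ (∀ (q : Q) (b : M), b ∈ B →
            (MonoidAlgebra.single (SemidirectProduct.inr q : G ⋊[φ] Q) (1 : ℤ)) • b ∈ B)
        ∧ (∀ (q : Q) (b : M), b ∈ B →
            (MonoidAlgebra.single (SemidirectProduct.inr q : G ⋊[φ] Q) (1 : ℤ)) • b = b →
              q = 1) := by
  letI instS : Module (MonoidAlgebra ℤ G) M :=
    Module.compHom M
      (MonoidAlgebra.mapDomainRingHom ℤ (SemidirectProduct.inl : G →* G ⋊[φ] Q))
  letI instR : Module (MonoidAlgebra ℤ G) (MonoidAlgebra ℤ (G ⋊[φ] Q)) :=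
    Module.compHom _ (S14T.fhom φ)
  have hsr : ∀ (s : MonoidAlgebra ℤ G) (r : MonoidAlgebra ℤ (G ⋊[φ] Q)),
      s • r = S14T.fhom φ s * r := fun _ _ => rfl
  have hsm : ∀ (s : MonoidAlgebra ℤ G) (m : M), s • m = S14T.fhom φ s • m := fun _ _ => rfl
  have habc : ∀ (q q' : Q) (m : M),
      (MonoidAlgebra.single (SemidirectProduct.inr q' : G ⋊[φ] Q) (1 : ℤ)) •
        ((MonoidAlgebra.single (SemidirectProduct.inr q : G ⋊[φ] Q) (1 : ℤ)) • m)
      = (MonoidAlgebra.single (SemidirectProduct.inr (q' * q) : G ⋊[φ] Q) (1 : ℤ)) • m := by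
    intro q q' m
    rw [smul_smul, MonoidAlgebra.single_mul_single, one_mul, map_mul]
  have hone : ∀ m : M,
      (MonoidAlgebra.single (SemidirectProduct.inr (1 : Q) : G ⋊[φ] Q) (1 : ℤ)) • m = m := by
    intro m
    rw [map_one, ← MonoidAlgebra.one_def, one_smul]
  constructor
  · intro hfree
    let ι := Module.Free.ChooseBasisIndex (MonoidAlgebra ℤ (G ⋊[φ] Q)) M
    let e : Module.Basis ι (MonoidAlgebra ℤ (G ⋊[φ] Q)) M := Module.Free.chooseBasis _ _
    set v : ι × Q → M := fun p => S14T.cBasis φ p.2 • e p.1 with hv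
    have hvs : ∀ (i : ι) (q : Q),
        v (i, q) = (MonoidAlgebra.single (SemidirectProduct.inr q : G ⋊[φ] Q) (1 : ℤ)) • e i := by
      intro i q
      show S14T.cBasis φ q • e i = _
      rw [S14T.cBasis_apply]
    have hindv : LinearIndependent (MonoidAlgebra ℤ G) v :=
      S14.indep_transfer (S14T.fhom φ) hsr hsm (S14T.cBasis φ) e e.linearIndependent
    have hspanv : Submodule.span (MonoidAlgebra ℤ G) (Set.range v) = ⊤ :=
      S14.span_transfer (S14T.fhom φ) hsr hsm (S14T.cBasis φ) e e.span_eq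
    refine ⟨Set.range v, ⟨?_, ?_⟩, ?_, ?_⟩
    · exact hindv.linearIndepOn_id
    · exact hspanv
    · rintro q' _ ⟨⟨i, q⟩, rfl⟩
      refine ⟨(i, q' * q), ?_⟩
      rw [hvs, hvs, habc]
    · rintro q' _ ⟨⟨i, q⟩, rfl⟩ heq
      have h1 : v (i, q' * q) = v (i, q) := by
        rw [hvs, hvs, ← habc, ← hvs]
        exact heq
      have h2 := hindv.injective h1
      have h3 : q' * q = q := (Prod.mk.injEq _ _ _ _ ▸ h2).2
      have : q' * q = 1 * q := by rw [one_mul]; exact h3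
      exact mul_right_cancel this
  · rintro ⟨B, ⟨hind, hspan⟩, hstab, hfree⟩
    let sd : Setoid ↥B :=
      { r := fun b b' => ∃ q : Q,
          (MonoidAlgebra.single (SemidirectProduct.inr q : G ⋊[φ] Q) (1 : ℤ)) • (b : M) = (b' : M)
        iseqv := by
          constructor
          · intro b; exact ⟨1, hone b⟩
          · rintro b b' ⟨q, hq⟩
            refine ⟨q⁻¹, ?_⟩
            rw [← hq, habc, inv_mul_cancel, hone]
          · rintro a b c ⟨q, hq⟩ ⟨q', hq'⟩
            exact ⟨q' * q, by rw [← habc, hq, hq']⟩ }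
    let t : Quotient sd → M := fun x => ((Quotient.out x : ↥B) : M)
    have htmem : ∀ x, t x ∈ B := fun x => (Quotient.out x).2
    let vB : Quotient sd × Q → ↥B := fun p =>
      ⟨(MonoidAlgebra.single (SemidirectProduct.inr p.2 : G ⋊[φ] Q) (1 : ℤ)) • t p.1,
        hstab _ _ (htmem p.1)⟩
    set v : Quotient sd × Q → M := fun p => S14T.cBasis φ p.2 • t p.1 with hv
    have hvs : ∀ p, v p = (vB p : M) := by
      intro p
      show S14T.cBasis φ p.2 • t p.1 = _
      rw [S14T.cBasis_apply]
    have hinj : Function.Injective vB := by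
      rintro ⟨x, q⟩ ⟨x', q'⟩ h
      have h0 : (MonoidAlgebra.single (SemidirectProduct.inr q : G ⋊[φ] Q) (1 : ℤ)) • t x
          = (MonoidAlgebra.single (SemidirectProduct.inr q' : G ⋊[φ] Q) (1 : ℤ)) • t x' :=
        congrArg Subtype.val h
      have hx : x = x' := by
        apply Quotient.out_equiv_out.mp
        refine ⟨q'⁻¹ * q, ?_⟩
        rw [← habc, h0, habc, inv_mul_cancel, hone]
      subst hx
      have h1 : (MonoidAlgebra.single (SemidirectProduct.inr (q'⁻¹ * q) : G ⋊[φ] Q) (1 : ℤ)) • t x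
          = t x := by
        rw [← habc, h0, habc, inv_mul_cancel, hone]
      have h2 := hfree _ _ (htmem x) h1
      have : q = q' := by
        have := inv_mul_eq_one.mp h2
        rw [this]
      rw [this]
    have hrange : Set.range v = B := by
      apply Set.eq_of_subset_of_subset
      · rintro _ ⟨p, rfl⟩
        rw [hvs]
        exact (vB p).2
      · intro b hb
        set X : Quotient sd := Quotient.mk sd ⟨b, hb⟩ with hX
        obtain ⟨q, hq⟩ : sd.r (Quotient.out X) ⟨b, hb⟩ := Quotient.exact (Quotient.out_eq X)
        exact ⟨(X, q), by rw [hvs]; exact hq⟩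
    have hindv : LinearIndependent (MonoidAlgebra ℤ G) v := by
      have : v = fun p => ((fun b : ↥B => (b : M)) ∘ vB) p := funext fun p => hvs p
      rw [this]
      exact hind.comp vB hinj
    have hspanv : Submodule.span (MonoidAlgebra ℤ G) (Set.range v) = ⊤ := by
      rw [hrange]; exact hspan
    have ht : LinearIndependent (MonoidAlgebra ℤ (G ⋊[φ] Q)) t :=
      S14.indep_converse (S14T.fhom φ) hsr hsm (S14T.cBasis φ) t hindv
    have hsp : Submodule.span (MonoidAlgebra ℤ (G ⋊[φ] Q)) (Set.range t) = ⊤ :=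
      S14.span_converse (S14T.fhom φ) hsm (S14T.cBasis φ) t hspanv
    exact Module.Free.of_basis (Module.Basis.mk ht (by rw [hsp]))
end
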